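/- arXiv:1412.5856 — 2 statements merged into one kernel-verified Lean document; each statement's English description precedes it below -/
import Mathlib

section
/- Let q be a bounded conservative Q-matrix on ℕ. Then every substochastic transition function P satisfying the backward integral equation for q is stochastic, i.e. ∑_j P t i j = 1 for all t ≥ 0 and all i; moreover any two substochastic transition functions satisfying the backward integral equation for q coincide. In particular q is regular. -/
open scoped BigOperators
open Filter Topology

/-- Row `i` of `q` with the diagonal entry replaced by `0`
(used to form sums over the off-diagonal entries). -/
noncomputable def offDiag (q : ℕ → ℕ → ℝ) (i j : ℕ) : ℝ :=
  if j = i then 0 else q i j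

/-- `q` is a (totally stable) Q-matrix on `ℕ`: nonnegative off-diagonal entries,
nonpositive diagonal, and each row is summable off the diagonal with
`∑_{j ≠ i} q i j ≤ qᵢ := -q i i`. -/
def IsQMatrix (q : ℕ → ℕ → ℝ) : Prop :=
  (∀ i j, i ≠ j → 0 ≤ q i j) ∧
  (∀ i, q i i ≤ 0) ∧
  (∀ i, Summable (fun j => offDiag q i j)) ∧
  (∀ i, (∑' j, offDiag q i j) ≤ - q i i)

/-- A Q-matrix is conservative if each row sums to `0`:
`∑_{j ≠ i} q i j = qᵢ = -q i i`. -/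
def IsConservative (q : ℕ → ℕ → ℝ) : Prop :=
  ∀ i, (∑' j, offDiag q i j) = - q i i

/-- A Q-matrix is bounded if `sup_i qᵢ < ∞`. -/
def IsBoundedQ (q : ℕ → ℕ → ℝ) : Prop :=
  ∃ C : ℝ, ∀ i, - q i i ≤ C

/-- A substochastic transition function on `[0,∞)` (parametrized by `t : ℝ`,
with all conditions imposed for `t ≥ 0`). -/
def IsTransitionFunction (P : ℝ → ℕ → ℕ → ℝ) : Prop :=
  (∀ t i j, 0 ≤ t → 0 ≤ P t i j) ∧
  (∀ t i, 0 ≤ t → Summable (fun j => P t i j)) ∧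
  (∀ t i, 0 ≤ t → (∑' j, P t i j) ≤ 1) ∧
  (∀ i j, P 0 i j = if i = j then 1 else 0) ∧
  (∀ t s i j, 0 ≤ t → 0 ≤ s → P (t + s) i j = ∑' k, P t i k * P s k j)

/-- `P` satisfies the backward integral equation for the Q-matrix `q`:
`P t i j = δ_{ij} e^{-qᵢ t} + ∫_0^t e^{-qᵢ (t-s)} ∑_{k ≠ i} q i k P s k j ds`
(here `-qᵢ = q i i`). -/
def BackwardEq (q : ℕ → ℕ → ℝ) (P : ℝ → ℕ → ℕ → ℝ) : Prop :=
  ∀ t i j, 0 ≤ t →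
    P t i j = (if i = j then 1 else 0) * Real.exp (q i i * t) +
      ∫ s in (0:ℝ)..t,
        Real.exp (q i i * (t - s)) * (∑' k, if k = i then 0 else q i k * P s k j)

/-- `P` is the minimal Q-process for `q`: a substochastic transition function
satisfying the backward integral equation for `q`, which is pointwise below any
other such transition function. -/
def IsMinimalQProcess (q : ℕ → ℕ → ℝ) (P : ℝ → ℕ → ℕ → ℝ) : Prop :=
  IsTransitionFunction P ∧ BackwardEq q P ∧
  ∀ P', IsTransitionFunction P' → BackwardEq q P' →
    ∀ t i j, 0 ≤ t → P t i j ≤ P' t i j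

/-- `q` is regular (`IsRegularQ` to avoid a name clash with Mathlib): conservative, and the minimal Q-process is honest (stochastic). -/
def IsRegularQ (q : ℕ → ℕ → ℝ) : Prop :=
  IsConservative q ∧
  ∀ P, IsMinimalQProcess q P → ∀ t, 0 ≤ t → ∀ i, (∑' j, P t i j) = 1

/-- The tail sum `∑_{j ≥ k} f j`. -/
noncomputable def tailSum (f : ℕ → ℝ) (k : ℕ) : ℝ :=
  ∑' j, if k ≤ j then f j else 0

/-- Condition (1.1): stochastic comparability of `P1` and `P2`. -/
def Cond11 (P1 P2 : ℝ → ℕ → ℕ → ℝ) : Prop :=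
  ∀ t, 0 ≤ t → ∀ k i m, i ≤ m → tailSum (P1 t i) k ≤ tailSum (P2 t m) k

/-- Condition (1.2) for the Q-matrices `q1`, `q2`. -/
def Cond12 (q1 q2 : ℕ → ℕ → ℝ) : Prop :=
  ∀ i m, i ≤ m → ∀ k, (k ≤ i ∨ m + 1 ≤ k) →
    tailSum (q1 i) k ≤ tailSum (q2 m) k

/-- Condition (1.3) for the Q-matrices `q1`, `q2` (the conservative reduction
of (1.2)). -/
def Cond13 (q1 q2 : ℕ → ℕ → ℝ) : Prop :=
  ∀ i m, i ≤ m →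
    (∀ k, m + 1 ≤ k → tailSum (q1 i) k ≤ tailSum (q2 m) k) ∧
    (∀ k, k + 1 ≤ i →
      (∑ j ∈ Finset.range (k + 1), q2 m j) ≤ ∑ j ∈ Finset.range (k + 1), q1 i j)

namespace S8
variable {q : ℕ → ℕ → ℝ} {P : ℝ → ℕ → ℕ → ℝ} {C : ℝ}
set_option maxHeartbeats 1000000

lemma tf_le_one (hP : IsTransitionFunction P) {t : ℝ} (ht : 0 ≤ t) (i j : ℕ) :
    P t i j ≤ 1 :=
  (Summable.le_tsum (hP.2.1 t i ht) j (fun k _ => hP.1 t i k ht)).trans (hP.2.2.1 t i ht)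

lemma tf_pair (hP : IsTransitionFunction P) {t : ℝ} (ht : 0 ≤ t) {k j : ℕ} (hkj : j ≠ k) :
    P t k j + P t k k ≤ 1 := by
  have h := Summable.sum_le_tsum ({j, k} : Finset ℕ) (fun m _ => hP.1 t k m ht) (hP.2.1 t k ht)
  rw [Finset.sum_pair hkj] at h
  exact h.trans (hP.2.2.1 t k ht)

lemma diag_ge (hq : IsQMatrix q) (hP : IsTransitionFunction P) (hBE : BackwardEq q P)
    {t : ℝ} (ht : 0 ≤ t) (i : ℕ) : Real.exp (q i i * t) ≤ P t i i := by
  rw [hBE t i i ht]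
  rw [if_pos rfl, one_mul]
  have h0 : 0 ≤ ∫ s in (0:ℝ)..t,
      Real.exp (q i i * (t - s)) * (∑' k, if k = i then 0 else q i k * P s k i) := by
    apply intervalIntegral.integral_nonneg ht
    intro u hu
    refine mul_nonneg (Real.exp_nonneg _) (tsum_nonneg fun k => ?_)
    by_cases hk : k = i
    · simp [hk]
    · simp only [if_neg hk]
      exact mul_nonneg (hq.1 i k fun h => hk h.symm) (hP.1 u k i hu.1)
  linarith

lemma diag_ge' (hq : IsQMatrix q) (hP : IsTransitionFunction P) (hBE : BackwardEq q P)
    (hC : ∀ i, -q i i ≤ C) {t : ℝ} (ht : 0 ≤ t) (i : ℕ) :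
    Real.exp (-(C * t)) ≤ P t i i := by
  refine le_trans ?_ (diag_ge hq hP hBE ht i)
  apply Real.exp_le_exp.mpr
  have := hC i
  nlinarith

lemma increment (hq : IsQMatrix q) (hP : IsTransitionFunction P) (hBE : BackwardEq q P)
    (hC : ∀ i, -q i i ≤ C) (hC0 : 0 ≤ C) {a ε : ℝ} (ha : 0 ≤ a) (hε : 0 ≤ ε) (i j : ℕ) :
    |P (a + ε) i j - P a i j| ≤ 1 - Real.exp (-(C * ε)) := by
  have hCK : P (a + ε) i j = ∑' k, P a i k * P ε k j := hP.2.2.2.2 a ε i j ha hε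
  have hdelta : P a i j = ∑' k, P a i k * (if k = j then 1 else 0) := by
    rw [tsum_eq_single j]
    · simp
    · intro b hb; simp [hb]
  have s1 : Summable (fun k => P a i k * P ε k j) :=
    Summable.of_nonneg_of_le
      (fun k => mul_nonneg (hP.1 a i k ha) (hP.1 ε k j hε))
      (fun k => mul_le_of_le_one_right (hP.1 a i k ha) (tf_le_one hP hε k j))
      (hP.2.1 a i ha)
  have s2 : Summable (fun k => P a i k * (if k = j then 1 else 0)) :=
    Summable.of_nonneg_of_le
      (fun k => mul_nonneg (hP.1 a i k ha) (by positivity))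
      (fun k => mul_le_of_le_one_right (hP.1 a i k ha) (by split <;> norm_num))
      (hP.2.1 a i ha)
  have key : ∀ k, |P a i k * P ε k j - P a i k * (if k = j then 1 else 0)|
      ≤ P a i k * (1 - Real.exp (-(C * ε))) := by
    intro k
    rw [← mul_sub, abs_mul, abs_of_nonneg (hP.1 a i k ha)]
    refine mul_le_mul_of_nonneg_left ?_ (hP.1 a i k ha)
    by_cases hk : k = j
    · subst hk
      rw [if_pos rfl, abs_of_nonpos (by linarith [tf_le_one hP hε k k])]
      have := diag_ge' hq hP hBE hC hε k
      linarith
    · rw [if_neg hk, sub_zero, abs_of_nonneg (hP.1 ε k j hε)]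
      have h1 := tf_pair hP hε (k := k) (j := j) (fun h => hk h.symm)
      have h2 := diag_ge' hq hP hBE hC hε k
      linarith
  have habs : |P (a + ε) i j - P a i j| ≤ ∑' k, P a i k * (1 - Real.exp (-(C * ε))) := by
    rw [hCK, hdelta, ← Summable.tsum_sub s1 s2]
    have hs : Summable (fun k => |P a i k * P ε k j - P a i k * (if k = j then 1 else 0)|) :=
      Summable.of_nonneg_of_le (fun k => abs_nonneg _) key
        ((hP.2.1 a i ha).mul_right _)
    calc |∑' k, (P a i k * P ε k j - P a i k * (if k = j then 1 else 0))|
        ≤ ∑' k, |P a i k * P ε k j - P a i k * (if k = j then 1 else 0)| := by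
          have hs' : Summable (fun k => ‖P a i k * P ε k j - P a i k * (if k = j then 1 else 0)‖) := by
            simpa only [Real.norm_eq_abs] using hs
          simpa only [Real.norm_eq_abs] using norm_tsum_le_tsum_norm hs'
      _ ≤ ∑' k, P a i k * (1 - Real.exp (-(C * ε))) := Summable.tsum_le_tsum key hs ((hP.2.1 a i ha).mul_right _)
  have hexp : 0 ≤ 1 - Real.exp (-(C * ε)) := by
    have : Real.exp (-(C * ε)) ≤ 1 := Real.exp_le_one_iff.mpr (neg_nonpos.mpr (mul_nonneg hC0 hε))
    linarith
  calc |P (a + ε) i j - P a i j| ≤ ∑' k, P a i k * (1 - Real.exp (-(C * ε))) := habs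
    _ = (∑' k, P a i k) * (1 - Real.exp (-(C * ε))) := tsum_mul_right
    _ ≤ 1 * (1 - Real.exp (-(C * ε))) :=
        mul_le_mul_of_nonneg_right (hP.2.2.1 a i ha) hexp
    _ = 1 - Real.exp (-(C * ε)) := one_mul _


lemma dist_le (hq : IsQMatrix q) (hP : IsTransitionFunction P) (hBE : BackwardEq q P)
    (hC : ∀ i, -q i i ≤ C) (hC0 : 0 ≤ C) {x y : ℝ} (hx : 0 ≤ x) (hy : 0 ≤ y) (i j : ℕ) :
    |P y i j - P x i j| ≤ C * |y - x| := by
  have base : ∀ u v : ℝ, 0 ≤ u → u ≤ v → |P v i j - P u i j| ≤ C * (v - u) := by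
    intro u v hu huv
    have h1 : |P (u + (v - u)) i j - P u i j| ≤ 1 - Real.exp (-(C * (v - u))) :=
      increment hq hP hBE hC hC0 hu (by linarith) i j
    rw [show u + (v - u) = v by ring] at h1
    have h2 : 1 - Real.exp (-(C * (v - u))) ≤ C * (v - u) := by
      have := Real.add_one_le_exp (-(C * (v - u)))
      linarith
    linarith
  rcases le_total x y with h | h
  · rw [abs_of_nonneg (by linarith : (0:ℝ) ≤ y - x)]
    exact base x y hx h
  · rw [abs_sub_comm, abs_of_nonpos (by linarith : y - x ≤ 0)]
    simpa using base y x hy h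

lemma cont_Pm (hq : IsQMatrix q) (hP : IsTransitionFunction P) (hBE : BackwardEq q P)
    (hC : ∀ i, -q i i ≤ C) (hC0 : 0 ≤ C) (i j : ℕ) :
    Continuous (fun t => P (max t 0) i j) := by
  have : LipschitzWith (Real.toNNReal C) (fun t => P (max t 0) i j) := by
    apply LipschitzWith.of_dist_le_mul
    intro x y
    rw [Real.dist_eq, Real.dist_eq, Real.coe_toNNReal C hC0]
    calc |P (max x 0) i j - P (max y 0) i j| ≤ C * |max x 0 - max y 0| :=
          dist_le hq hP hBE hC hC0 (le_max_right y 0) (le_max_right x 0) i j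
      _ ≤ C * |x - y| := mul_le_mul_of_nonneg_left (abs_max_sub_max_le_abs x y 0) hC0
  exact this.continuous

lemma summable_hfun (hq : IsQMatrix q) (i : ℕ) (f : ℕ → ℝ) (hf0 : ∀ k, 0 ≤ f k)
    (hf1 : ∀ k, f k ≤ 1) :
    Summable (fun k => if k = i then 0 else q i k * f k) := by
  apply Summable.of_nonneg_of_le ?_ ?_ (hq.2.2.1 i)
  · intro k
    by_cases hk : k = i
    · simp [hk]
    · simp only [if_neg hk]
      exact mul_nonneg (hq.1 i k fun h => hk h.symm) (hf0 k)
  · intro k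
    by_cases hk : k = i
    · simp [hk, offDiag]
    · simp only [if_neg hk, offDiag]
      exact mul_le_of_le_one_right (hq.1 i k fun h => hk h.symm) (hf1 k)

lemma hfun_le (hq : IsQMatrix q) (i : ℕ) (f : ℕ → ℝ) (hf0 : ∀ k, 0 ≤ f k)
    (hf1 : ∀ k, f k ≤ 1) :
    (∑' k, if k = i then 0 else q i k * f k) ≤ -q i i := by
  refine le_trans (Summable.tsum_le_tsum ?_ ?_ (hq.2.2.1 i)) (hq.2.2.2 i)
  · intro k
    by_cases hk : k = i
    · simp [hk, offDiag]
    · simp only [if_neg hk, offDiag]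
      exact mul_le_of_le_one_right (hq.1 i k fun h => hk h.symm) (hf1 k)
  · exact summable_hfun hq i f hf0 hf1

lemma hfun_nonneg (hq : IsQMatrix q) (i : ℕ) (f : ℕ → ℝ) (hf0 : ∀ k, 0 ≤ f k) :
    0 ≤ ∑' k, if k = i then 0 else q i k * f k := by
  refine tsum_nonneg fun k => ?_
  by_cases hk : k = i
  · simp [hk]
  · simp only [if_neg hk]
    exact mul_nonneg (hq.1 i k fun h => hk h.symm) (hf0 k)

lemma cont_hfun (hq : IsQMatrix q) (i j : ℕ) (g : ℕ → ℝ → ℝ)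
    (hgc : ∀ k, Continuous (g k)) (hg0 : ∀ k s, 0 ≤ g k s) (hg1 : ∀ k s, g k s ≤ 1) :
    Continuous (fun s => ∑' k, if k = i then 0 else q i k * g k s) := by
  apply continuous_tsum ?_ (hq.2.2.1 i) ?_
  · intro k
    by_cases hk : k = i
    · simp only [if_pos hk]; exact continuous_const
    · simp only [if_neg hk]; exact continuous_const.mul (hgc k)
  · intro k s
    by_cases hk : k = i
    · simp [hk, offDiag]
    · simp only [if_neg hk, offDiag, Real.norm_eq_abs]
      rw [abs_of_nonneg (mul_nonneg (hq.1 i k fun h => hk h.symm) (hg0 k s))]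
      exact mul_le_of_le_one_right (hq.1 i k fun h => hk h.symm) (hg1 k s)

lemma exp_int (c t : ℝ) :
    (∫ s in (0:ℝ)..t, Real.exp (c * (t - s)) * (-c)) = 1 - Real.exp (c * t) := by
  have h := intervalIntegral.integral_comp_sub_left
    (a := (0:ℝ)) (b := t) (fun u => Real.exp (c * u) * (-c)) t
  rw [sub_self, sub_zero] at h
  rw [h]
  have hderiv : ∀ u ∈ Set.uIcc (0:ℝ) t,
      HasDerivAt (fun u => -Real.exp (c * u)) (Real.exp (c * u) * (-c)) u := by
    intro u _
    have h1 : HasDerivAt (fun u : ℝ => c * u) c u := by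
      simpa using (hasDerivAt_id u).const_mul c
    have h2 := (Real.hasDerivAt_exp (c * u)).comp u h1
    have h3 : HasDerivAt (fun u => -Real.exp (c * u)) (-(Real.exp (c * u) * c)) u := h2.neg
    convert h3 using 1
    ring
  rw [intervalIntegral.integral_eq_sub_of_hasDerivAt hderiv
    (((Real.continuous_exp.comp (continuous_const.mul continuous_id)).mul
      continuous_const).intervalIntegrable 0 t)]
  simp
  ring


lemma rho_props (hC0 : 0 ≤ C) {t0 : ℝ} (ht0 : 0 ≤ t0) :
    0 ≤ 1 - Real.exp (-(C * t0)) ∧ 1 - Real.exp (-(C * t0)) < 1 := by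
  constructor
  · have : Real.exp (-(C * t0)) ≤ 1 :=
      Real.exp_le_one_iff.mpr (neg_nonpos.mpr (mul_nonneg hC0 ht0))
    linarith
  · have := Real.exp_pos (-(C * t0))
    linarith

lemma exp_sub_le (hC0 : 0 ≤ C) {c t t0 : ℝ} (hcC : -c ≤ C) (ht : 0 ≤ t) (ht0 : t ≤ t0) :
    1 - Real.exp (c * t) ≤ 1 - Real.exp (-(C * t0)) := by
  have : -(C * t0) ≤ c * t := by nlinarith
  have := Real.exp_le_exp.mpr this
  linarith

lemma unique (hq : IsQMatrix q) (hcons : IsConservative q) (hC : ∀ i, -q i i ≤ C)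
    (hP : IsTransitionFunction P) (hBE : BackwardEq q P)
    {P' : ℝ → ℕ → ℕ → ℝ} (hP' : IsTransitionFunction P') (hBE' : BackwardEq q P') :
    ∀ t : ℝ, 0 ≤ t → ∀ i j, P t i j = P' t i j := by
  have hC0 : 0 ≤ C := le_trans (neg_nonneg.mpr (hq.2.1 0)) (hC 0)
  intro t0 ht0 i0 j
  set ρ := 1 - Real.exp (-(C * t0)) with hρdef
  obtain ⟨hρ0, hρ1⟩ := rho_props hC0 ht0
  have key : ∀ b : ℝ, 0 ≤ b →
      (∀ s ∈ Set.Icc (0:ℝ) t0, ∀ k, |P s k j - P' s k j| ≤ b) →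
      ∀ t ∈ Set.Icc (0:ℝ) t0, ∀ i, |P t i j - P' t i j| ≤ ρ * b := by
    intro b hb hres t ht i
    obtain ⟨ht1, ht2⟩ := ht
    set c := q i i with hcdef
    have hcC : -c ≤ C := hC i
    -- continuity of the two integrands (in max-form)
    have hfc : Continuous (fun s => ∑' k, if k = i then 0 else q i k * P (max s 0) k j) :=
      cont_hfun hq i j _ (fun k => cont_Pm hq hP hBE hC hC0 k j)
        (fun k s => hP.1 _ k j (le_max_right s 0))
        (fun k s => tf_le_one hP (le_max_right s 0) k j)
    have hfc' : Continuous (fun s => ∑' k, if k = i then 0 else q i k * P' (max s 0) k j) :=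
      cont_hfun hq i j _ (fun k => cont_Pm hq hP' hBE' hC hC0 k j)
        (fun k s => hP'.1 _ k j (le_max_right s 0))
        (fun k s => tf_le_one hP' (le_max_right s 0) k j)
    have hec : Continuous (fun s : ℝ => Real.exp (c * (t - s))) :=
      Real.continuous_exp.comp (continuous_const.mul (continuous_const.sub continuous_id))
    -- rewrite the BE integrals to max-form
    have hIeq : ∀ (PP : ℝ → ℕ → ℕ → ℝ),
        (∫ s in (0:ℝ)..t, Real.exp (c * (t - s)) * (∑' k, if k = i then 0 else q i k * PP s k j))
        = ∫ s in (0:ℝ)..t,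
            Real.exp (c * (t - s)) * (∑' k, if k = i then 0 else q i k * PP (max s 0) k j) := by
      intro PP
      apply intervalIntegral.integral_congr
      intro s hs
      rw [Set.uIcc_of_le ht1] at hs
      simp only [max_eq_left hs.1]
    have hD : P t i j - P' t i j = ∫ s in (0:ℝ)..t, Real.exp (c * (t - s)) *
        ((∑' k, if k = i then 0 else q i k * P (max s 0) k j)
          - ∑' k, if k = i then 0 else q i k * P' (max s 0) k j) := by
      have e1 := hBE t i j ht1
      have e2 := hBE' t i j ht1
      rw [hIeq P] at e1
      rw [hIeq P'] at e2
      rw [e1, e2, add_sub_add_left_eq_sub,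
        ← intervalIntegral.integral_sub ((hec.fun_mul hfc).intervalIntegrable 0 t)
          ((hec.fun_mul hfc').intervalIntegrable 0 t)]
      congr 1
      funext s
      ring
    -- pointwise bound on the integrand
    have hpt : ∀ s ∈ Set.Icc (0:ℝ) t,
        ‖Real.exp (c * (t - s)) *
          ((∑' k, if k = i then 0 else q i k * P (max s 0) k j)
            - ∑' k, if k = i then 0 else q i k * P' (max s 0) k j)‖
        ≤ Real.exp (c * (t - s)) * ((-c) * b) := by
      intro s hs
      have hs0 : (0:ℝ) ≤ s := hs.1
      have hst0 : s ≤ t0 := le_trans hs.2 ht2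
      rw [Real.norm_eq_abs, abs_mul, abs_of_nonneg (Real.exp_nonneg _)]
      refine mul_le_mul_of_nonneg_left ?_ (Real.exp_nonneg _)
      -- |Θ s| ≤ (-c) * b
      have sA : Summable (fun k => if k = i then 0 else q i k * P (max s 0) k j) :=
        summable_hfun hq i _ (fun k => hP.1 _ k j (le_max_right s 0))
          (fun k => tf_le_one hP (le_max_right s 0) k j)
      have sB : Summable (fun k => if k = i then 0 else q i k * P' (max s 0) k j) :=
        summable_hfun hq i _ (fun k => hP'.1 _ k j (le_max_right s 0))
          (fun k => tf_le_one hP' (le_max_right s 0) k j)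
      rw [← Summable.tsum_sub sA sB]
      have hptk : ∀ k, |(if k = i then 0 else q i k * P (max s 0) k j)
          - (if k = i then 0 else q i k * P' (max s 0) k j)| ≤ offDiag q i k * b := by
        intro k
        by_cases hk : k = i
        · simp [hk, offDiag]
        · simp only [if_neg hk, offDiag, ← mul_sub]
          rw [abs_mul, abs_of_nonneg (hq.1 i k fun h => hk h.symm)]
          refine mul_le_mul_of_nonneg_left ?_ (hq.1 i k fun h => hk h.symm)
          rw [max_eq_left hs0]
          exact hres s ⟨hs0, hst0⟩ k
      have habs : Summable (fun k => |(if k = i then 0 else q i k * P (max s 0) k j)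
          - (if k = i then 0 else q i k * P' (max s 0) k j)|) :=
        Summable.of_nonneg_of_le (fun k => abs_nonneg _) hptk ((hq.2.2.1 i).mul_right b)
      calc |∑' k, ((if k = i then 0 else q i k * P (max s 0) k j)
              - (if k = i then 0 else q i k * P' (max s 0) k j))|
          ≤ ∑' k, |(if k = i then 0 else q i k * P (max s 0) k j)
              - (if k = i then 0 else q i k * P' (max s 0) k j)| := by
            have := norm_tsum_le_tsum_norm (f := fun k =>
              (if k = i then 0 else q i k * P (max s 0) k j)
              - (if k = i then 0 else q i k * P' (max s 0) k j))
              (by simpa only [Real.norm_eq_abs] using habs)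
            simpa only [Real.norm_eq_abs] using this
        _ ≤ ∑' k, offDiag q i k * b :=
            Summable.tsum_le_tsum hptk habs ((hq.2.2.1 i).mul_right b)
        _ = (∑' k, offDiag q i k) * b := tsum_mul_right
        _ = (-c) * b := by rw [hcons i]
    -- integrate the bound
    calc |P t i j - P' t i j|
        ≤ ∫ s in (0:ℝ)..t, ‖Real.exp (c * (t - s)) *
            ((∑' k, if k = i then 0 else q i k * P (max s 0) k j)
              - ∑' k, if k = i then 0 else q i k * P' (max s 0) k j)‖ := by
          rw [hD, ← Real.norm_eq_abs]
          exact intervalIntegral.norm_integral_le_integral_norm ht1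
      _ ≤ ∫ s in (0:ℝ)..t, Real.exp (c * (t - s)) * ((-c) * b) := by
          apply intervalIntegral.integral_mono_on ht1
          · exact ((hec.mul (hfc.sub hfc')).norm.intervalIntegrable 0 t)
          · exact ((hec.mul continuous_const).intervalIntegrable 0 t)
          · exact hpt
      _ = ∫ s in (0:ℝ)..t, b * (Real.exp (c * (t - s)) * (-c)) := by
          congr 1; funext s; ring
      _ = b * (1 - Real.exp (c * t)) := by
          rw [intervalIntegral.integral_const_mul, exp_int]
      _ ≤ b * ρ := mul_le_mul_of_nonneg_left (exp_sub_le hC0 hcC ht1 ht2) hb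
      _ = ρ * b := mul_comm b ρ
  -- iterate
  have hn : ∀ n : ℕ, ∀ t ∈ Set.Icc (0:ℝ) t0, ∀ i, |P t i j - P' t i j| ≤ ρ ^ n := by
    intro n
    induction n with
    | zero =>
      intro t ht i
      rw [pow_zero, abs_sub_le_iff]
      constructor
      · have := tf_le_one hP ht.1 i j; have := hP'.1 t i j ht.1; linarith
      · have := tf_le_one hP' ht.1 i j; have := hP.1 t i j ht.1; linarith
    | succ n ih =>
      intro t ht i
      have := key (ρ ^ n) (pow_nonneg hρ0 n) (fun s hs k => ih s hs k) t ht i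
      calc |P t i j - P' t i j| ≤ ρ * ρ ^ n := this
        _ = ρ ^ (n + 1) := (pow_succ' ρ n).symm
  have htend : Tendsto (fun n : ℕ => ρ ^ n) atTop (𝓝 0) :=
    tendsto_pow_atTop_nhds_zero_of_lt_one hρ0 hρ1
  have hle0 : |P t0 i0 j - P' t0 i0 j| ≤ 0 :=
    ge_of_tendsto htend (Filter.Eventually.of_forall fun n =>
      hn n t0 ⟨ht0, le_refl t0⟩ i0)
  have := abs_nonneg (P t0 i0 j - P' t0 i0 j)
  have : |P t0 i0 j - P' t0 i0 j| = 0 := le_antisymm hle0 this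
  exact sub_eq_zero.mp (abs_eq_zero.mp this)


lemma honest (hq : IsQMatrix q) (hcons : IsConservative q) (hC : ∀ i, -q i i ≤ C)
    (hP : IsTransitionFunction P) (hBE : BackwardEq q P) :
    ∀ t : ℝ, 0 ≤ t → ∀ i, (∑' j, P t i j) = 1 := by
  have hC0 : 0 ≤ C := le_trans (neg_nonneg.mpr (hq.2.1 0)) (hC 0)
  intro t0 ht0 i0
  set ρ := 1 - Real.exp (-(C * t0)) with hρdef
  obtain ⟨hρ0, hρ1⟩ := rho_props hC0 ht0
  -- the contraction step
  have key : ∀ b : ℝ, 0 ≤ b →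
      (∀ s ∈ Set.Icc (0:ℝ) t0, ∀ k, 1 - b ≤ ∑' j, P s k j) →
      ∀ t ∈ Set.Icc (0:ℝ) t0, ∀ i, 1 - ρ * b ≤ ∑' j, P t i j := by
    intro b hb hres t ht i
    obtain ⟨ht1, ht2⟩ := ht
    set c := q i i with hcdef
    have hcC : -c ≤ C := hC i
    have hc0 : c ≤ 0 := hq.2.1 i
    have hec : Continuous (fun s : ℝ => Real.exp (c * (t - s))) :=
      Real.continuous_exp.comp (continuous_const.mul (continuous_const.sub continuous_id))
    have hec1 : ∀ s ∈ Set.Icc (0:ℝ) t, Real.exp (c * (t - s)) ≤ 1 := by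
      intro s hs
      apply Real.exp_le_one_iff.mpr
      have : 0 ≤ t - s := by linarith [hs.2]
      nlinarith
    -- continuity of the summand functions
    have hfc : ∀ j, Continuous
        (fun s => ∑' k, if k = i then 0 else q i k * P (max s 0) k j) := fun j =>
      cont_hfun hq i j _ (fun k => cont_Pm hq hP hBE hC hC0 k j)
        (fun k s => hP.1 _ k j (le_max_right s 0))
        (fun k s => tf_le_one hP (le_max_right s 0) k j)
    -- backward equation in max-form
    have hBEj : ∀ j, P t i j = (if i = j then 1 else 0) * Real.exp (c * t) +
        ∫ s in (0:ℝ)..t, Real.exp (c * (t - s)) *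
          (∑' k, if k = i then 0 else q i k * P (max s 0) k j) := by
      intro j
      have e1 := hBE t i j ht1
      have : (∫ s in (0:ℝ)..t, Real.exp (c * (t - s)) *
            (∑' k, if k = i then 0 else q i k * P s k j))
          = ∫ s in (0:ℝ)..t, Real.exp (c * (t - s)) *
            (∑' k, if k = i then 0 else q i k * P (max s 0) k j) := by
        apply intervalIntegral.integral_congr
        intro s hs
        rw [Set.uIcc_of_le ht1] at hs
        simp only [max_eq_left hs.1]
      rw [← this]
      exact e1
    -- summability of the integral terms
    have hsumδ : Summable (fun j => (if i = j then 1 else 0) * Real.exp (c * t)) := by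
      have : (fun j => (if i = j then 1 else 0) * Real.exp (c * t))
          = fun j => if j = i then Real.exp (c * t) else 0 := by
        funext j
        by_cases hj : j = i
        · simp [hj]
        · have hj' : ¬ i = j := fun h => hj h.symm
          simp [hj, hj']
      rw [this]
      exact ⟨_, hasSum_ite_eq i _⟩
    have hsumI : Summable (fun j => ∫ s in (0:ℝ)..t, Real.exp (c * (t - s)) *
        (∑' k, if k = i then 0 else q i k * P (max s 0) k j)) := by
      refine ((hP.2.1 t i ht1).sub hsumδ).congr fun j => ?_
      rw [hBEj j]
      ring
    -- split the total sum
    have hFsplit : (∑' j, P t i j) = Real.exp (c * t) +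
        ∑' j, ∫ s in (0:ℝ)..t, Real.exp (c * (t - s)) *
          (∑' k, if k = i then 0 else q i k * P (max s 0) k j) := by
      calc (∑' j, P t i j)
          = ∑' j, ((if i = j then 1 else 0) * Real.exp (c * t) +
            ∫ s in (0:ℝ)..t, Real.exp (c * (t - s)) *
              (∑' k, if k = i then 0 else q i k * P (max s 0) k j)) :=
            tsum_congr fun j => hBEj j
        _ = (∑' j, (if i = j then 1 else 0) * Real.exp (c * t)) +
            ∑' j, ∫ s in (0:ℝ)..t, Real.exp (c * (t - s)) *
              (∑' k, if k = i then 0 else q i k * P (max s 0) k j) :=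
            Summable.tsum_add hsumδ hsumI
        _ = Real.exp (c * t) + _ := by
            congr 1
            rw [tsum_eq_single i]
            · simp
            · intro j hj
              have hj' : ¬ i = j := fun h => hj h.symm
              simp [hj']
    -- partial sums of the integrals
    have hSc : ∀ N k, Continuous (fun s => ∑ j ∈ Finset.range N, P (max s 0) k j) :=
      fun N k => continuous_finset_sum _ (fun j _ => cont_Pm hq hP hBE hC hC0 k j)
    have hS0 : ∀ N (s : ℝ) k, 0 ≤ ∑ j ∈ Finset.range N, P (max s 0) k j :=
      fun N s k => Finset.sum_nonneg fun j _ => hP.1 _ k j (le_max_right s 0)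
    have hS1 : ∀ N (s : ℝ) k, (∑ j ∈ Finset.range N, P (max s 0) k j) ≤ 1 := fun N s k =>
      (Summable.sum_le_tsum (Finset.range N) (fun j _ => hP.1 _ k j (le_max_right s 0))
        (hP.2.1 _ k (le_max_right s 0))).trans (hP.2.2.1 _ k (le_max_right s 0))
    have hΦNc : ∀ N, Continuous (fun s => ∑' k, if k = i then 0 else
        q i k * ∑ j ∈ Finset.range N, P (max s 0) k j) := fun N =>
      cont_hfun hq i 0 _ (fun k => hSc N k) (fun k s => hS0 N s k) (fun k s => hS1 N s k)
    have hΦN_le : ∀ N (s : ℝ), (∑' k, if k = i then 0 else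
        q i k * ∑ j ∈ Finset.range N, P (max s 0) k j) ≤ -c := fun N s =>
      hfun_le hq i _ (fun k => hS0 N s k) (fun k => hS1 N s k)
    have hΦN_0 : ∀ N (s : ℝ), 0 ≤ ∑' k, if k = i then 0 else
        q i k * ∑ j ∈ Finset.range N, P (max s 0) k j := fun N s =>
      hfun_nonneg hq i _ (fun k => hS0 N s k)
    -- finite swap
    have hswapfin : ∀ N (s : ℝ), (∑ j ∈ Finset.range N,
        ∑' k, if k = i then 0 else q i k * P (max s 0) k j)
        = ∑' k, if k = i then 0 else q i k * ∑ j ∈ Finset.range N, P (max s 0) k j := by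
      intro N s
      rw [← Summable.tsum_finsetSum (fun j _ => summable_hfun hq i _
        (fun k => hP.1 _ k j (le_max_right s 0))
        (fun k => tf_le_one hP (le_max_right s 0) k j))]
      apply tsum_congr
      intro k
      by_cases hk : k = i
      · simp [hk]
      · simp only [if_neg hk]
        rw [Finset.mul_sum]
    have hpart : ∀ N : ℕ, (∑ j ∈ Finset.range N, ∫ s in (0:ℝ)..t,
          Real.exp (c * (t - s)) * (∑' k, if k = i then 0 else q i k * P (max s 0) k j))
        = ∫ s in (0:ℝ)..t, Real.exp (c * (t - s)) *
          (∑' k, if k = i then 0 else q i k * ∑ j ∈ Finset.range N, P (max s 0) k j) := by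
      intro N
      rw [← intervalIntegral.integral_finset_sum
        (fun j _ => ((hec.fun_mul (hfc j)).intervalIntegrable 0 t))]
      congr 1
      funext s
      rw [← Finset.mul_sum, hswapfin N s]
    -- summability of j ↦ hfun j s and pointwise convergence
    have hsumhfun : ∀ s : ℝ, Summable (fun j =>
        ∑' k, if k = i then 0 else q i k * P (max s 0) k j) := by
      intro s
      apply summable_of_sum_range_le (c := -c)
      · intro j
        exact hfun_nonneg hq i _ (fun k => hP.1 _ k j (le_max_right s 0))
      · intro N
        rw [hswapfin N s]
        exact hΦN_le N s
    have hptlim : ∀ s : ℝ, Tendsto (fun N => ∑' k, if k = i then 0 else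
          q i k * ∑ j ∈ Finset.range N, P (max s 0) k j) atTop
        (𝓝 (∑' j, ∑' k, if k = i then 0 else q i k * P (max s 0) k j)) := by
      intro s
      have h1 := (hsumhfun s).hasSum.tendsto_sum_nat
      refine h1.congr fun N => ?_
      exact hswapfin N s
    -- the limit function Φ
    set Φ : ℝ → ℝ := fun s => ∑' j, ∑' k, if k = i then 0 else q i k * P (max s 0) k j
      with hΦdef
    have hΦm : Measurable Φ := by
      apply measurable_of_tendsto_metrizable (f := fun N s => ∑' k, if k = i then 0 else
        q i k * ∑ j ∈ Finset.range N, P (max s 0) k j)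
        (fun N => (hΦNc N).measurable)
      rw [tendsto_pi_nhds]
      exact fun s => hptlim s
    have hΦ0 : ∀ s, 0 ≤ Φ s := fun s =>
      tsum_nonneg fun j => hfun_nonneg hq i _ (fun k => hP.1 _ k j (le_max_right s 0))
    have hΦle : ∀ s, Φ s ≤ -c := fun s =>
      le_of_tendsto (hptlim s) (Filter.Eventually.of_forall fun N => hΦN_le N s)
    -- integrability of the limit integrand
    have hint : IntervalIntegrable (fun s => Real.exp (c * (t - s)) * Φ s)
        MeasureTheory.volume 0 t := by
      apply IntervalIntegrable.mono_fun (intervalIntegrable_const (c := C))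
      · exact (hec.measurable.mul hΦm).aestronglyMeasurable
      · rw [Set.uIoc_of_le ht1]
        refine (MeasureTheory.ae_restrict_iff' measurableSet_Ioc).mpr
          (Filter.Eventually.of_forall fun s hs => ?_)
        have h1 : Real.exp (c * (t - s)) ≤ 1 := hec1 s ⟨le_of_lt hs.1, hs.2⟩
        have h2 := hΦ0 s
        have h3 := hΦle s
        simp only [Real.norm_eq_abs]
        rw [abs_of_nonneg (mul_nonneg (Real.exp_nonneg _) h2), abs_of_nonneg hC0]
        nlinarith [Real.exp_nonneg (c * (t - s))]
    -- dominated convergence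
    have hDCT : Tendsto (fun N => ∫ s in (0:ℝ)..t, Real.exp (c * (t - s)) *
          (∑' k, if k = i then 0 else q i k * ∑ j ∈ Finset.range N, P (max s 0) k j)) atTop
        (𝓝 (∫ s in (0:ℝ)..t, Real.exp (c * (t - s)) * Φ s)) := by
      apply intervalIntegral.tendsto_integral_filter_of_dominated_convergence (bound := fun _ => C)
      · exact Filter.Eventually.of_forall fun N =>
          (hec.mul (hΦNc N)).aestronglyMeasurable
      · refine Filter.Eventually.of_forall fun N => Filter.Eventually.of_forall fun s hs => ?_
        rw [Set.uIoc_of_le ht1] at hs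
        have h1 : Real.exp (c * (t - s)) ≤ 1 := hec1 s ⟨le_of_lt hs.1, hs.2⟩
        have h2 := hΦN_0 N s
        have h3 := hΦN_le N s
        simp only [Real.norm_eq_abs]
        rw [abs_of_nonneg (mul_nonneg (Real.exp_nonneg _) h2)]
        nlinarith [Real.exp_nonneg (c * (t - s))]
      · exact intervalIntegrable_const
      · exact Filter.Eventually.of_forall fun s _ =>
          Tendsto.const_mul _ (hptlim s)
    have hIint : (∑' j, ∫ s in (0:ℝ)..t, Real.exp (c * (t - s)) *
          (∑' k, if k = i then 0 else q i k * P (max s 0) k j))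
        = ∫ s in (0:ℝ)..t, Real.exp (c * (t - s)) * Φ s := by
      refine tendsto_nhds_unique ?_ hDCT
      have h1 := hsumI.hasSum.tendsto_sum_nat
      refine h1.congr fun N => ?_
      exact hpart N
    -- lower bound for Φ via Fubini for nonnegative double sums
    have hΦlb : ∀ s ∈ Set.Icc (0:ℝ) t, (1 - b) * (-c) ≤ Φ s := by
      intro s hs
      have hs0 : (0:ℝ) ≤ s := hs.1
      have hst0 : s ≤ t0 := le_trans hs.2 ht2
      set f : ℕ → ℕ → ℝ := fun k j => if k = i then 0 else q i k * P (max s 0) k j with hfdef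
      have hpos : ∀ p : ℕ × ℕ, 0 ≤ Function.uncurry f p := by
        rintro ⟨k, j⟩
        by_cases hk : k = i
        · simp [hfdef, Function.uncurry, hk]
        · simp only [hfdef, Function.uncurry, if_neg hk]
          exact mul_nonneg (hq.1 i k fun h => hk h.symm) (hP.1 _ k j (le_max_right s 0))
      have hrow : ∀ k, Summable (f k) := by
        intro k
        by_cases hk : k = i
        · refine summable_zero.congr fun j => ?_
          simp [hfdef, hk]
        · refine ((hP.2.1 _ k (le_max_right s 0)).mul_left (q i k)).congr fun j => ?_
          simp [hfdef, if_neg hk]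
      have hrowsum : (fun k => ∑' j, f k j) = fun k =>
          if k = i then 0 else q i k * ∑' j, P (max s 0) k j := by
        funext k
        by_cases hk : k = i
        · simp [hfdef, hk]
        · simp only [hfdef, if_neg hk]
          exact tsum_mul_left
      have hrows_summable : Summable (fun k => ∑' j, f k j) := by
        rw [hrowsum]
        exact summable_hfun hq i _
          (fun k => tsum_nonneg fun j => hP.1 _ k j (le_max_right s 0))
          (fun k => hP.2.2.1 _ k (le_max_right s 0))
      have huncurry : Summable (Function.uncurry f) :=
        (summable_prod_of_nonneg hpos).mpr ⟨hrow, hrows_summable⟩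
      have hcol : ∀ j, Summable (fun k => f k j) := by
        intro j
        have := huncurry.prod_symm.prod_factor j
        exact this.congr fun k => rfl
      have hcomm : Φ s = ∑' k, ∑' j, f k j := Summable.tsum_comm' huncurry hrow hcol
      rw [hcomm, hrowsum]
      calc (1 - b) * (-c) = (∑' k, offDiag q i k) * (1 - b) := by rw [hcons i]; ring
        _ = ∑' k, offDiag q i k * (1 - b) := tsum_mul_right.symm
        _ ≤ ∑' k, (if k = i then 0 else q i k * ∑' j, P (max s 0) k j) := by
            refine Summable.tsum_le_tsum (fun k => ?_) ((hq.2.2.1 i).mul_right _) ?_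
            · by_cases hk : k = i
              · simp [hk, offDiag]
              · simp only [if_neg hk, offDiag]
                refine mul_le_mul_of_nonneg_left ?_ (hq.1 i k fun h => hk h.symm)
                rw [max_eq_left hs0]
                exact hres s ⟨hs0, hst0⟩ k
            · rw [← hrowsum]
              exact hrows_summable
    -- integrate the lower bound
    have hintlb : (1 - b) * (1 - Real.exp (c * t)) ≤
        ∫ s in (0:ℝ)..t, Real.exp (c * (t - s)) * Φ s := by
      have h1 : (∫ s in (0:ℝ)..t, (1 - b) * (Real.exp (c * (t - s)) * (-c)))
          = (1 - b) * (1 - Real.exp (c * t)) := by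
        rw [intervalIntegral.integral_const_mul, exp_int]
      rw [← h1]
      apply intervalIntegral.integral_mono_on ht1
      · exact (continuous_const.mul (hec.mul continuous_const)).intervalIntegrable 0 t
      · exact hint
      · intro s hs
        have := hΦlb s hs
        have h2 : (1 - b) * (Real.exp (c * (t - s)) * (-c))
            = Real.exp (c * (t - s)) * ((1 - b) * (-c)) := by ring
        rw [h2]
        exact mul_le_mul_of_nonneg_left this (Real.exp_nonneg _)
    -- combine
    rw [hFsplit, hIint]
    have hfin : 1 - Real.exp (c * t) ≤ ρ := by
      rw [hρdef]
      exact exp_sub_le hC0 hcC ht1 ht2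
    nlinarith
  -- iterate the contraction
  have hn : ∀ n : ℕ, ∀ t ∈ Set.Icc (0:ℝ) t0, ∀ i, 1 - ρ ^ n ≤ ∑' j, P t i j := by
    intro n
    induction n with
    | zero =>
      intro t ht i
      rw [pow_zero]
      have : 0 ≤ ∑' j, P t i j := tsum_nonneg (fun j => hP.1 t i j ht.1)
      linarith
    | succ n ih =>
      intro t ht i
      have := key (ρ ^ n) (pow_nonneg hρ0 n) (fun s hs k => ih s hs k) t ht i
      calc 1 - ρ ^ (n + 1) = 1 - ρ * ρ ^ n := by rw [pow_succ']
        _ ≤ ∑' j, P t i j := this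
  have htend : Tendsto (fun n : ℕ => 1 - ρ ^ n) atTop (𝓝 1) := by
    have h := tendsto_pow_atTop_nhds_zero_of_lt_one hρ0 hρ1
    have h2 := (tendsto_const_nhds :
      Tendsto (fun _ : ℕ => (1:ℝ)) atTop (𝓝 1)).sub h
    simpa using h2
  have hge : 1 ≤ ∑' j, P t0 i0 j :=
    le_of_tendsto htend (Filter.Eventually.of_forall fun n => hn n t0 ⟨ht0, le_refl t0⟩ i0)
  exact le_antisymm (hP.2.2.1 t0 i0 ht0) hge


end S8
/-- a bounded conservative Q-matrix has a unique Q-process, which is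
honest; in particular such a Q-matrix is regular. -/
theorem statement8 (q : ℕ → ℕ → ℝ) (hq : IsQMatrix q)
    (hcons : IsConservative q) (hbdd : IsBoundedQ q) :
    (∀ P : ℝ → ℕ → ℕ → ℝ, IsTransitionFunction P → BackwardEq q P →
      ∀ t : ℝ, 0 ≤ t → ∀ i : ℕ, (∑' j, P t i j) = 1) ∧
    (∀ P P' : ℝ → ℕ → ℕ → ℝ, IsTransitionFunction P → BackwardEq q P →
      IsTransitionFunction P' → BackwardEq q P' →
      ∀ t : ℝ, 0 ≤ t → ∀ i j : ℕ, P t i j = P' t i j) ∧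
    IsRegularQ q := by
  obtain ⟨C, hC⟩ := hbdd
  refine ⟨fun P hTF hBE t ht i => S8.honest hq hcons hC hTF hBE t ht i,
    fun P P' h1 h2 h3 h4 t ht i j => S8.unique hq hcons hC h1 h2 h3 h4 t ht i j,
    hcons, fun P hmin t ht i => S8.honest hq hcons hC hmin.1 hmin.2.1 t ht i⟩
end

section
/- Let q and q⁽ⁿ⁾ (n ∈ ℕ) be Q-matrices on ℕ such that lim_{n→∞} q⁽ⁿ⁾ i j = q i j for all i, j, and suppose q is regular. Let P⁽ⁿ⁾ be the minimal Q-process for q⁽ⁿ⁾ and P the minimal Q-process for q. Then lim_{n→∞} P⁽ⁿ⁾ t i j = P t i j for all i, j and all t ≥ 0. -/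
open scoped BigOperators
open Filter Topology

namespace S10

open MeasureTheory Real Set Filter
open scoped ENNReal NNReal

variable {q : ℕ → ℕ → ℝ} {Pf : ℝ → ℕ → ℕ → ℝ}

lemma offDiag_nonneg (hq : IsQMatrix q) (i k : ℕ) : 0 ≤ offDiag q i k := by
  by_cases h : k = i
  · simp [_root_.offDiag, h]
  · simpa [_root_.offDiag, h] using hq.1 i k (Ne.symm h)

lemma summable_offDiag (hq : IsQMatrix q) (i : ℕ) : Summable (fun k => offDiag q i k) :=
  hq.2.2.1 i

lemma summable_offDiag_mul (hq : IsQMatrix q) (i : ℕ) {X : ℕ → ℝ} (h0 : ∀ k, 0 ≤ X k)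
    (h1 : ∀ k, X k ≤ 1) : Summable (fun k => offDiag q i k * X k) :=
  Summable.of_nonneg_of_le (fun k => mul_nonneg (offDiag_nonneg hq i k) (h0 k))
    (fun k => mul_le_of_le_one_right (offDiag_nonneg hq i k) (h1 k)) (summable_offDiag hq i)

lemma tsum_offDiag_mul_le (hq : IsQMatrix q) (i : ℕ) {X : ℕ → ℝ} (h0 : ∀ k, 0 ≤ X k)
    (h1 : ∀ k, X k ≤ 1) : (∑' k, offDiag q i k * X k) ≤ -q i i :=
  le_trans (Summable.tsum_le_tsum (fun k => mul_le_of_le_one_right (offDiag_nonneg hq i k) (h1 k))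
    (summable_offDiag_mul hq i h0 h1) (summable_offDiag hq i)) (hq.2.2.2 i)

lemma backward_sum_eq (q : ℕ → ℕ → ℝ) (i : ℕ) (X : ℕ → ℝ) :
    (∑' k, if k = i then 0 else q i k * X k) = ∑' k, offDiag q i k * X k := by
  refine tsum_congr fun k => ?_
  by_cases h : k = i <;> simp [_root_.offDiag, h]

lemma tf_le_one (hT : IsTransitionFunction Pf) {t : ℝ} (ht : 0 ≤ t) (i j : ℕ) : Pf t i j ≤ 1 :=
  le_trans (Summable.le_tsum (hT.2.1 t i ht) j (fun k _ => hT.1 t i k ht)) (hT.2.2.1 t i ht)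

lemma sol_ge_exp (hq : IsQMatrix q) (hT : IsTransitionFunction Pf) (hB : BackwardEq q Pf)
    {t : ℝ} (ht : 0 ≤ t) (i j : ℕ) :
    (if i = j then (1:ℝ) else 0) * Real.exp (q i i * t) ≤ Pf t i j := by
  rw [hB t i j ht]
  have h : 0 ≤ ∫ s in (0:ℝ)..t,
      Real.exp (q i i * (t - s)) * (∑' k, if k = i then 0 else q i k * Pf s k j) := by
    apply intervalIntegral.integral_nonneg ht
    intro u hu
    apply mul_nonneg (Real.exp_nonneg _)
    apply tsum_nonneg
    intro k
    by_cases hk : k = i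
    · simp [hk]
    · simp only [if_neg hk]
      exact mul_nonneg (hq.1 i k (Ne.symm hk)) (hT.1 u k j hu.1)
  linarith

lemma sol_diag_ge (hq : IsQMatrix q) (hT : IsTransitionFunction Pf) (hB : BackwardEq q Pf)
    {t : ℝ} (ht : 0 ≤ t) (i : ℕ) : Real.exp (q i i * t) ≤ Pf t i i := by
  simpa using sol_ge_exp hq hT hB ht i i

lemma sol_abs_sub (hq : IsQMatrix q) (hT : IsTransitionFunction Pf) (hB : BackwardEq q Pf)
    (i j : ℕ) {t h : ℝ} (ht : 0 ≤ t) (hh : 0 ≤ h) :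
    |Pf (t + h) i j - Pf t i j| ≤ 2 * (1 - Real.exp (q i i * h)) := by
  have hck := hT.2.2.2.2 h t i j hh ht
  have hsum : Summable (fun k => Pf h i k * Pf t k j) :=
    Summable.of_nonneg_of_le (fun k => mul_nonneg (hT.1 h i k hh) (hT.1 t k j ht))
      (fun k => mul_le_of_le_one_right (hT.1 h i k hh) (tf_le_one hT ht k j)) (hT.2.1 h i hh)
  have hsplit := Summable.tsum_eq_add_tsum_ite hsum i
  have htail0 : 0 ≤ ∑' k, if k = i then 0 else Pf h i k * Pf t k j := by
    apply tsum_nonneg; intro k; by_cases hk : k = i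
    · simp [hk]
    · simp only [if_neg hk]; exact mul_nonneg (hT.1 h i k hh) (hT.1 t k j ht)
  have htail : (∑' k, if k = i then 0 else Pf h i k * Pf t k j)
      ≤ 1 - Pf h i i := by
    have hsum2 : Summable (fun k => if k = i then 0 else Pf h i k * Pf t k j) :=
      Summable.of_nonneg_of_le
        (fun k => by by_cases hk : k = i
                     · simp [hk]
                     · simp only [if_neg hk]; exact mul_nonneg (hT.1 h i k hh) (hT.1 t k j ht))
        (fun k => by by_cases hk : k = i
                     · simp only [if_pos hk, hk]; exact hT.1 h i i hh
                     · simp only [if_neg hk]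
                       exact mul_le_of_le_one_right (hT.1 h i k hh) (tf_le_one hT ht k j))
        (hT.2.1 h i hh)
    have hsum3 : Summable (fun k => if k = i then 0 else Pf h i k) :=
      Summable.of_nonneg_of_le
        (fun k => by by_cases hk : k = i
                     · simp [hk]
                     · simp only [if_neg hk]; exact hT.1 h i k hh)
        (fun k => by by_cases hk : k = i
                     · simp only [if_pos hk, hk]; exact hT.1 h i i hh
                     · simp only [if_neg hk]; exact le_refl _)
        (hT.2.1 h i hh)
    have h1 : (∑' k, if k = i then 0 else Pf h i k * Pf t k j)
        ≤ ∑' k, if k = i then 0 else Pf h i k := by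
      apply Summable.tsum_le_tsum _ hsum2 hsum3
      intro k; by_cases hk : k = i
      · simp [hk]
      · simp only [if_neg hk]
        exact mul_le_of_le_one_right (hT.1 h i k hh) (tf_le_one hT ht k j)
    have h2 := Summable.tsum_eq_add_tsum_ite (hT.2.1 h i hh) i
    have h3 : (∑' k, Pf h i k) ≤ 1 := hT.2.2.1 h i hh
    linarith
  have hdiag1 : Pf h i i ≤ 1 := tf_le_one hT hh i i
  have hdiag2 : Real.exp (q i i * h) ≤ Pf h i i := sol_diag_ge hq hT hB hh i
  have hPt0 : 0 ≤ Pf t i j := hT.1 t i j ht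
  have hPt1 : Pf t i j ≤ 1 := tf_le_one hT ht i j
  have heq : Pf (t + h) i j
      = Pf h i i * Pf t i j + ∑' k, if k = i then 0 else Pf h i k * Pf t k j := by
    rw [add_comm t h, hck, hsplit]
  have k1 : (1 - Pf h i i) * Pf t i j ≤ (1 - Pf h i i) * 1 :=
    mul_le_mul_of_nonneg_left hPt1 (by linarith)
  rw [heq, abs_le]
  constructor <;> nlinarith

lemma sol_continuousOn (hq : IsQMatrix q) (hT : IsTransitionFunction Pf) (hB : BackwardEq q Pf)
    (k j : ℕ) : ContinuousOn (fun t => Pf t k j) (Ici (0:ℝ)) := by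
  intro t₀ ht₀
  have key : ∀ t ∈ Ici (0:ℝ), |Pf t k j - Pf t₀ k j| ≤ 2 * (1 - Real.exp (q k k * |t - t₀|)) := by
    intro t ht
    rcases le_total t₀ t with hle | hle
    · have h := sol_abs_sub hq hT hB k j ht₀ (h := t - t₀) (by linarith)
      have e1 : t₀ + (t - t₀) = t := by ring
      rw [e1] at h
      have e2 : |t - t₀| = t - t₀ := abs_of_nonneg (by linarith)
      rw [e2]; exact h
    · have h := sol_abs_sub hq hT hB k j ht (h := t₀ - t) (by linarith)
      have e1 : t + (t₀ - t) = t₀ := by ring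
      rw [e1] at h
      have e2 : |t - t₀| = t₀ - t := by rw [abs_sub_comm]; exact abs_of_nonneg (by linarith)
      rw [e2, abs_sub_comm]; exact h
  have hg : Tendsto (fun t => 2 * (1 - Real.exp (q k k * |t - t₀|))) (nhdsWithin t₀ (Ici 0))
      (nhds 0) := by
    have hc : Continuous fun t : ℝ => 2 * (1 - Real.exp (q k k * |t - t₀|)) := by
      continuity
    have h0 : 2 * (1 - Real.exp (q k k * |t₀ - t₀|)) = 0 := by simp
    have := (hc.tendsto t₀).mono_left (nhdsWithin_le_nhds (s := Ici (0:ℝ)))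
    rwa [h0] at this
  have habs : Tendsto (fun t => |Pf t k j - Pf t₀ k j|) (nhdsWithin t₀ (Ici 0)) (nhds 0) := by
    apply squeeze_zero' (Eventually.of_forall fun t => abs_nonneg _) _ hg
    exact eventually_mem_nhdsWithin.mono key
  exact tendsto_iff_dist_tendsto_zero.mpr (by simpa [Real.dist_eq] using habs)

lemma sol_sum_continuousOn (hq : IsQMatrix q) (hT : IsTransitionFunction Pf)
    (hB : BackwardEq q Pf) (i j : ℕ) :
    ContinuousOn (fun u => ∑' k, offDiag q i k * Pf u k j) (Ici (0:ℝ)) := by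
  apply continuousOn_tsum (u := fun k => offDiag q i k)
  · intro k; exact continuousOn_const.mul (sol_continuousOn hq hT hB k j)
  · exact summable_offDiag hq i
  · intro k u hu
    rw [Real.norm_eq_abs, abs_mul, abs_of_nonneg (offDiag_nonneg hq i k)]
    refine mul_le_of_le_one_right (offDiag_nonneg hq i k) ?_
    exact abs_le.mpr ⟨by linarith [hT.1 u k j hu], tf_le_one hT hu k j⟩


/-! ### The backward iterates -/

noncomputable def gIter (q : ℕ → ℕ → ℝ) : ℕ → ℝ → ℕ → ℕ → ℝ
  | 0 => fun t i j => if 0 ≤ t then (if i = j then Real.exp (q i i * t) else 0) else 0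
  | (m+1) => fun t i j =>
      if 0 ≤ t then
        ∫ u in (0:ℝ)..t,
          Real.exp (q i i * u) * ∑' k, offDiag q i k * gIter q m (t - u) k j
      else 0

lemma gIter_zero (q : ℕ → ℕ → ℝ) (t : ℝ) (i j : ℕ) :
    gIter q 0 t i j = if 0 ≤ t then (if i = j then Real.exp (q i i * t) else 0) else 0 := rfl

lemma gIter_succ (q : ℕ → ℕ → ℝ) (m : ℕ) (t : ℝ) (i j : ℕ) :
    gIter q (m+1) t i j = if 0 ≤ t then
        ∫ u in (0:ℝ)..t,
          Real.exp (q i i * u) * ∑' k, offDiag q i k * gIter q m (t - u) k j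
      else 0 := rfl

lemma gIter_neg (q : ℕ → ℕ → ℝ) (m : ℕ) {t : ℝ} (ht : ¬ 0 ≤ t) (i j : ℕ) :
    gIter q m t i j = 0 := by
  cases m <;> simp [gIter_zero, gIter_succ, ht]

lemma gIter_nonneg (hq : IsQMatrix q) (m : ℕ) (t : ℝ) (i j : ℕ) : 0 ≤ gIter q m t i j := by
  induction m generalizing t i j with
  | zero =>
    rw [gIter_zero]
    split
    · split
      · exact Real.exp_nonneg _
      · exact le_refl 0
    · exact le_refl 0
  | succ m ih =>
    rw [gIter_succ]
    split
    · apply intervalIntegral.integral_nonneg ‹0 ≤ t›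
      intro u _
      refine mul_nonneg (Real.exp_nonneg _) (tsum_nonneg fun k => ?_)
      exact mul_nonneg (offDiag_nonneg hq i k) (ih _ _ _)
    · exact le_refl 0

lemma integral_exp_mul_neg {a : ℝ} {t : ℝ} :
    ∫ u in (0:ℝ)..t, Real.exp (a * u) * (-a) = 1 - Real.exp (a * t) := by
  have hder : ∀ u ∈ Set.uIcc (0:ℝ) t, HasDerivAt (fun x => -Real.exp (a * x))
      (Real.exp (a * u) * (-a)) u := by
    intro u _
    have h1 : HasDerivAt (fun x : ℝ => a * x) a u := by
      simpa using (hasDerivAt_id u).const_mul a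
    have h2 := (Real.hasDerivAt_exp (a * u)).comp u h1
    have h3 := h2.neg
    exact h3.congr_deriv (by ring)
  have hint : IntervalIntegrable (fun u => Real.exp (a * u) * (-a)) volume 0 t :=
    (((Real.continuous_exp.comp (continuous_const.mul continuous_id)).mul
      continuous_const)).intervalIntegrable 0 t
  rw [intervalIntegral.integral_eq_sub_of_hasDerivAt hder hint]
  simp
  ring

/-- Primitive of a function continuous on `[0,∞)` is continuous on `[0,∞)`. -/
lemma continuousOn_primitive_Ici {f : ℝ → ℝ} (hf : ContinuousOn f (Ici (0:ℝ))) :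
    ContinuousOn (fun t => ∫ u in (0:ℝ)..t, f u) (Ici (0:ℝ)) := by
  intro t₀ ht₀
  have huIcc : Set.uIcc (0:ℝ) (t₀+1) = Set.Icc 0 (t₀+1) := Set.uIcc_of_le (by linarith [ht₀.out])
  have h1 : ContinuousOn (fun t => ∫ u in (0:ℝ)..t, f u) (Set.uIcc 0 (t₀+1)) := by
    apply intervalIntegral.continuousOn_primitive_interval
    rw [huIcc]
    exact (hf.mono (Set.Icc_subset_Ici_self)).integrableOn_compact isCompact_Icc
  have h2 : ContinuousWithinAt (fun t => ∫ u in (0:ℝ)..t, f u) (Set.uIcc 0 (t₀+1)) t₀ := by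
    apply h1
    rw [huIcc]
    exact ⟨ht₀.out, by linarith [ht₀.out]⟩
  apply h2.mono_of_mem_nhdsWithin
  rw [huIcc]
  rw [mem_nhdsWithin]
  exact ⟨Iio (t₀+1), isOpen_Iio, by simp, fun x hx => ⟨hx.2.out, le_of_lt hx.1⟩⟩

/-- bounds and continuity of the iterates -/
lemma gIter_pack (hq : IsQMatrix q) : ∀ m,
    (∀ t i j, gIter q m t i j ≤ 1) ∧
    (∀ i j, ContinuousOn (fun t => gIter q m t i j) (Ici (0:ℝ))) := by
  intro m
  induction m with
  | zero =>
    constructor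
    · intro t i j
      rw [gIter_zero]
      split
      · split
        · exact Real.exp_le_one_iff.mpr (mul_nonpos_of_nonpos_of_nonneg (hq.2.1 i) ‹0 ≤ t›)
        · exact zero_le_one
      · exact zero_le_one
    · intro i j
      by_cases hij : i = j
      · apply ContinuousOn.congr
          (f := fun t => Real.exp (q i i * t))
          ((Real.continuous_exp.comp (continuous_const.mul continuous_id)).continuousOn)
        intro t ht
        simp [gIter_zero, ht.out, hij]
      · apply ContinuousOn.congr (f := fun _ => (0:ℝ)) continuousOn_const
        intro t ht
        simp [gIter_zero, ht.out, hij]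
  | succ m ih =>
    obtain ⟨ihb, ihc⟩ := ih
    have hgnn : ∀ t i j, 0 ≤ gIter q m t i j := gIter_nonneg hq m
    -- continuity of the summed kernel
    have Scont : ∀ i j, ContinuousOn (fun x => ∑' k, offDiag q i k * gIter q m x k j)
        (Ici (0:ℝ)) := by
      intro i j
      apply continuousOn_tsum (u := fun k => offDiag q i k)
        (fun k => continuousOn_const.mul (ihc k j)) (summable_offDiag hq i)
      intro k u _
      simp only [Pi.mul_apply]
      rw [Real.norm_eq_abs, abs_mul, abs_of_nonneg (offDiag_nonneg hq i k)]
      exact mul_le_of_le_one_right (offDiag_nonneg hq i k)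
        (abs_le.mpr ⟨by linarith [hgnn u k j], ihb u k j⟩)
    have Snn : ∀ x i j, 0 ≤ ∑' k, offDiag q i k * gIter q m x k j := fun x i j =>
      tsum_nonneg fun k => mul_nonneg (offDiag_nonneg hq i k) (hgnn x k j)
    have Sbound : ∀ x i j, (∑' k, offDiag q i k * gIter q m x k j) ≤ -q i i := fun x i j =>
      tsum_offDiag_mul_le hq i (fun k => hgnn x k j) (fun k => ihb x k j)
    -- integrability of the integrand on [0,t]
    have hIint : ∀ (t : ℝ), 0 ≤ t → ∀ i j, IntervalIntegrable
        (fun u => Real.exp (q i i * u) * ∑' k, offDiag q i k * gIter q m (t - u) k j)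
        volume 0 t := by
      intro t ht i j
      apply ContinuousOn.intervalIntegrable
      apply ContinuousOn.mul
        ((Real.continuous_exp.comp (continuous_const.mul continuous_id)).continuousOn)
      apply (Scont i j).comp ((continuous_const.sub continuous_id).continuousOn)
      intro u hu
      rw [Set.uIcc_of_le ht] at hu
      exact Set.mem_Ici.mpr (by simp; linarith [hu.2])
    constructor
    · intro t i j
      rw [gIter_succ]
      split
      · have hle : (∫ u in (0:ℝ)..t,
            Real.exp (q i i * u) * ∑' k, offDiag q i k * gIter q m (t - u) k j)
            ≤ ∫ u in (0:ℝ)..t, Real.exp (q i i * u) * (-q i i) := by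
          apply intervalIntegral.integral_mono_on ‹0 ≤ t› (hIint t ‹0 ≤ t› i j)
          · exact (((Real.continuous_exp.comp (continuous_const.mul continuous_id)).mul
              continuous_const)).intervalIntegrable 0 t
          · intro u _
            exact mul_le_mul_of_nonneg_left (Sbound (t-u) i j) (Real.exp_nonneg _)
        rw [integral_exp_mul_neg] at hle
        have := Real.exp_nonneg (q i i * t)
        linarith
      · exact zero_le_one
    · intro i j
      -- rewrite as exp(at) * ∫₀ᵗ exp(-a v) * S v dv  on Ici 0
      have key : ∀ t ∈ Ici (0:ℝ), gIter q (m+1) t i j =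
          Real.exp (q i i * t) *
            ∫ v in (0:ℝ)..t, Real.exp (-(q i i) * v) * ∑' k, offDiag q i k * gIter q m v k j := by
        intro t ht
        rw [gIter_succ, if_pos ht.out]
        have h1 : (fun u => Real.exp (q i i * u) * ∑' k, offDiag q i k * gIter q m (t - u) k j)
            = fun u => (fun v => Real.exp (q i i * (t - v)) * ∑' k, offDiag q i k * gIter q m v k j) (t - u) := by
          funext u
          simp only []
          rw [show t - (t - u) = u by ring]
        rw [h1, intervalIntegral.integral_comp_sub_left
          (fun v => Real.exp (q i i * (t - v)) * ∑' k, offDiag q i k * gIter q m v k j) t]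
        rw [sub_self, sub_zero]
        rw [show (fun v => Real.exp (q i i * (t - v)) * ∑' k, offDiag q i k * gIter q m v k j)
            = fun v => Real.exp (q i i * t) * (Real.exp (-(q i i) * v) * ∑' k, offDiag q i k * gIter q m v k j) by
          funext v
          rw [← mul_assoc, ← Real.exp_add]
          congr 2
          ring]
        rw [intervalIntegral.integral_const_mul]
      apply ContinuousOn.congr _ (fun t ht => key t ht)
      apply ContinuousOn.mul
        ((Real.continuous_exp.comp (continuous_const.mul continuous_id)).continuousOn)
      apply continuousOn_primitive_Ici
      exact ((Real.continuous_exp.comp (continuous_const.mul continuous_id)).continuousOn).mul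
        (Scont i j)

lemma gIter_le_one (hq : IsQMatrix q) (m : ℕ) (t : ℝ) (i j : ℕ) : gIter q m t i j ≤ 1 :=
  (gIter_pack hq m).1 t i j

lemma gIter_continuousOn (hq : IsQMatrix q) (m : ℕ) (i j : ℕ) :
    ContinuousOn (fun t => gIter q m t i j) (Ici (0:ℝ)) :=
  (gIter_pack hq m).2 i j

lemma sKer_continuousOn (hq : IsQMatrix q) (m : ℕ) (i j : ℕ) :
    ContinuousOn (fun x => ∑' k, offDiag q i k * gIter q m x k j) (Ici (0:ℝ)) := by
  apply continuousOn_tsum (u := fun k => offDiag q i k)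
    (fun k => continuousOn_const.mul (gIter_continuousOn hq m k j)) (summable_offDiag hq i)
  intro k u _
  simp only [Pi.mul_apply]
  rw [Real.norm_eq_abs, abs_mul, abs_of_nonneg (offDiag_nonneg hq i k)]
  exact mul_le_of_le_one_right (offDiag_nonneg hq i k)
    (abs_le.mpr ⟨by linarith [gIter_nonneg hq m u k j], gIter_le_one hq m u k j⟩)

lemma sKer_nonneg (hq : IsQMatrix q) (m : ℕ) (x : ℝ) (i j : ℕ) :
    0 ≤ ∑' k, offDiag q i k * gIter q m x k j :=
  tsum_nonneg fun k => mul_nonneg (offDiag_nonneg hq i k) (gIter_nonneg hq m x k j)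

lemma sKer_le (hq : IsQMatrix q) (m : ℕ) (x : ℝ) (i j : ℕ) :
    (∑' k, offDiag q i k * gIter q m x k j) ≤ -q i i :=
  tsum_offDiag_mul_le hq i (fun k => gIter_nonneg hq m x k j) (fun k => gIter_le_one hq m x k j)

lemma summable_sKer (hq : IsQMatrix q) (m : ℕ) (x : ℝ) (i j : ℕ) :
    Summable (fun k => offDiag q i k * gIter q m x k j) :=
  summable_offDiag_mul hq i (fun k => gIter_nonneg hq m x k j) (fun k => gIter_le_one hq m x k j)
/-! ### ENNReal versions -/

noncomputable def GIter (q : ℕ → ℕ → ℝ) (m : ℕ) (t : ℝ) (i j : ℕ) : ℝ≥0∞ :=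
  ENNReal.ofReal (gIter q m t i j)

noncomputable def FItE (q : ℕ → ℕ → ℝ) (M : ℕ) (t : ℝ) (i j : ℕ) : ℝ≥0∞ :=
  ∑ l ∈ Finset.range (M+1), GIter q l t i j

noncomputable def PminE (q : ℕ → ℕ → ℝ) (t : ℝ) (i j : ℕ) : ℝ≥0∞ :=
  ∑' m, GIter q m t i j

noncomputable def Pmin (q : ℕ → ℕ → ℝ) (t : ℝ) (i j : ℕ) : ℝ :=
  (PminE q t i j).toReal

lemma GIter_zero_eq (q : ℕ → ℕ → ℝ) {t : ℝ} (ht : 0 ≤ t) (i j : ℕ) :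
    GIter q 0 t i j = if j = i then ENNReal.ofReal (Real.exp (q i i * t)) else 0 := by
  unfold GIter
  rw [gIter_zero, if_pos ht]
  by_cases h : i = j
  · simp [h]
  · rw [if_neg h, if_neg (fun hh : j = i => h hh.symm)]
    simp

lemma integrand_continuousOn (hq : IsQMatrix q) (m : ℕ) {t : ℝ} (ht : 0 ≤ t) (i j : ℕ)
    {c : ℝ} :
    ContinuousOn (fun u => Real.exp (q i i * u) * ∑' k, offDiag q i k * gIter q m (c - u) k j)
      (Set.Icc (c - t) c) := by
  apply ContinuousOn.mul
    ((Real.continuous_exp.comp (continuous_const.mul continuous_id)).continuousOn)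
  apply (sKer_continuousOn hq m i j).comp ((continuous_const.sub continuous_id).continuousOn)
  intro u hu
  exact Set.mem_Ici.mpr (by simp only [Pi.sub_apply, id]; linarith [hu.2])

/-- the master bridge: the recursion for the iterates, in `ℝ≥0∞` form -/
lemma GIter_succ_lintegral (hq : IsQMatrix q) (m : ℕ) {t : ℝ} (ht : 0 ≤ t) (i j : ℕ) :
    GIter q (m+1) t i j = ∫⁻ u in Set.Ioc (0:ℝ) t,
      ENNReal.ofReal (Real.exp (q i i * u)) *
        ∑' k, ENNReal.ofReal (offDiag q i k) * GIter q m (t - u) k j := by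
  unfold GIter
  rw [gIter_succ, if_pos ht]
  set f := fun u => Real.exp (q i i * u) * ∑' k, offDiag q i k * gIter q m (t - u) k j with hf
  have hfc : ContinuousOn f (Set.Icc 0 t) := by
    have := integrand_continuousOn hq m ht i j (c := t)
    rwa [sub_self] at this
  have hInt : MeasureTheory.IntegrableOn f (Set.Ioc 0 t) volume :=
    (hfc.integrableOn_compact isCompact_Icc).mono_set Set.Ioc_subset_Icc_self
  have hnn : 0 ≤ᵐ[volume.restrict (Set.Ioc 0 t)] f := by
    apply Filter.Eventually.of_forall
    intro u
    exact mul_nonneg (Real.exp_nonneg _) (sKer_nonneg hq m (t - u) i j)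
  rw [intervalIntegral.integral_of_le ht,
    MeasureTheory.ofReal_integral_eq_lintegral_ofReal hInt hnn]
  apply MeasureTheory.setLIntegral_congr_fun measurableSet_Ioc
  intro u _
  rw [hf]
  simp only []
  rw [ENNReal.ofReal_mul (Real.exp_nonneg _)]
  congr 1
  rw [ENNReal.ofReal_tsum_of_nonneg
    (fun k => mul_nonneg (offDiag_nonneg hq i k) (gIter_nonneg hq m (t-u) k j))
    (summable_sKer hq m (t-u) i j)]
  exact tsum_congr fun k => ENNReal.ofReal_mul (offDiag_nonneg hq i k)

lemma aemeasurable_tsum_ennreal {α : Type*} [MeasurableSpace α] {μ : MeasureTheory.Measure α}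
    {f : ℕ → α → ℝ≥0∞} (h : ∀ n, AEMeasurable (f n) μ) :
    AEMeasurable (fun x => ∑' n, f n x) μ := by
  choose g hgm hge using h
  refine ⟨fun x => ∑' n, g n x, Measurable.ennreal_tsum hgm, ?_⟩
  have hall : ∀ᵐ x ∂μ, ∀ n, f n x = g n x := MeasureTheory.ae_all_iff.mpr hge
  exact hall.mono fun x hx => tsum_congr hx

lemma GIter_aemeas_sub (hq : IsQMatrix q) (m : ℕ) {t : ℝ} (ht : 0 ≤ t) (k j : ℕ) :
    AEMeasurable (fun u => GIter q m (t - u) k j) (volume.restrict (Set.Ioc 0 t)) := by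
  have hc : ContinuousOn (fun u => gIter q m (t - u) k j) (Set.Ioc 0 t) := by
    apply (gIter_continuousOn hq m k j).comp ((continuous_const.sub continuous_id).continuousOn)
    intro u hu
    exact Set.mem_Ici.mpr (by simp only [Pi.sub_apply, id]; linarith [hu.2])
  exact ENNReal.measurable_ofReal.comp_aemeasurable (hc.aemeasurable measurableSet_Ioc)

lemma kernelE_aemeas (hq : IsQMatrix q) (m : ℕ) {t : ℝ} (ht : 0 ≤ t) (i j : ℕ) :
    AEMeasurable (fun u => ENNReal.ofReal (Real.exp (q i i * u)) *
      ∑' k, ENNReal.ofReal (offDiag q i k) * GIter q m (t - u) k j)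
      (volume.restrict (Set.Ioc 0 t)) := by
  apply AEMeasurable.mul
  · exact (ENNReal.measurable_ofReal.comp
      (Real.measurable_exp.comp (measurable_const.mul measurable_id))).aemeasurable
  · exact aemeasurable_tsum_ennreal fun k => (GIter_aemeas_sub hq m ht k j).const_mul _

/-- the recursion for the partial sums `FItE` -/
lemma FItE_succ (hq : IsQMatrix q) (M : ℕ) {t : ℝ} (ht : 0 ≤ t) (i j : ℕ) :
    FItE q (M+1) t i j = (if j = i then ENNReal.ofReal (Real.exp (q i i * t)) else 0)
      + ∫⁻ u in Set.Ioc (0:ℝ) t, ENNReal.ofReal (Real.exp (q i i * u)) *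
          ∑' k, ENNReal.ofReal (offDiag q i k) * FItE q M (t - u) k j := by
  unfold FItE
  rw [Finset.sum_range_succ']
  rw [GIter_zero_eq q ht i j]
  have hsum : (∑ l ∈ Finset.range (M+1), GIter q (l+1) t i j)
      = ∫⁻ u in Set.Ioc (0:ℝ) t, ENNReal.ofReal (Real.exp (q i i * u)) *
          ∑' k, ENNReal.ofReal (offDiag q i k) *
            ∑ l ∈ Finset.range (M+1), GIter q l (t - u) k j := by
    rw [Finset.sum_congr rfl (fun l _ => GIter_succ_lintegral hq l ht i j)]
    rw [← MeasureTheory.lintegral_finset_sum' _ (fun l _ => kernelE_aemeas hq l ht i j)]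
    apply MeasureTheory.lintegral_congr
    intro u
    rw [← Finset.mul_sum]
    congr 1
    rw [← Summable.tsum_finsetSum (fun l _ => ENNReal.summable)]
    exact tsum_congr fun k => by rw [← Finset.mul_sum]
  rw [hsum, add_comm]

lemma FItE_aemeas_sub (hq : IsQMatrix q) (M : ℕ) {t : ℝ} (ht : 0 ≤ t) (k j : ℕ) :
    AEMeasurable (fun u => FItE q M (t - u) k j) (volume.restrict (Set.Ioc 0 t)) := by
  unfold FItE
  exact Finset.aemeasurable_fun_sum _ (fun l _ => GIter_aemeas_sub hq l ht k j)

lemma kernelE_FItE_aemeas (hq : IsQMatrix q) (M : ℕ) {t : ℝ} (ht : 0 ≤ t) (i j : ℕ) :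
    AEMeasurable (fun u => ENNReal.ofReal (Real.exp (q i i * u)) *
      ∑' k, ENNReal.ofReal (offDiag q i k) * FItE q M (t - u) k j)
      (volume.restrict (Set.Ioc 0 t)) := by
  apply AEMeasurable.mul
  · exact (ENNReal.measurable_ofReal.comp
      (Real.measurable_exp.comp (measurable_const.mul measurable_id))).aemeasurable
  · exact aemeasurable_tsum_ennreal fun k => (FItE_aemeas_sub hq M ht k j).const_mul _

lemma lintegral_expE (hq : IsQMatrix q) {t : ℝ} (ht : 0 ≤ t) (i : ℕ) :
    (∫⁻ u in Set.Ioc (0:ℝ) t,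
      ENNReal.ofReal (Real.exp (q i i * u)) * ENNReal.ofReal (-q i i))
      = ENNReal.ofReal (1 - Real.exp (q i i * t)) := by
  have hpt : ∀ u : ℝ, ENNReal.ofReal (Real.exp (q i i * u)) * ENNReal.ofReal (-q i i)
      = ENNReal.ofReal (Real.exp (q i i * u) * (-q i i)) :=
    fun u => (ENNReal.ofReal_mul (Real.exp_nonneg _)).symm
  simp only [hpt]
  have hcont : Continuous (fun u => Real.exp (q i i * u) * (-q i i)) :=
    (Real.continuous_exp.comp (continuous_const.mul continuous_id)).mul continuous_const
  have hInt : MeasureTheory.IntegrableOn (fun u => Real.exp (q i i * u) * (-q i i))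
      (Set.Ioc 0 t) volume :=
    (hcont.continuousOn.integrableOn_compact isCompact_Icc).mono_set
      (Set.Ioc_subset_Icc_self (a := (0:ℝ)) (b := t))
  have hnn : 0 ≤ᵐ[volume.restrict (Set.Ioc 0 t)] fun u => Real.exp (q i i * u) * (-q i i) :=
    Filter.Eventually.of_forall fun u =>
      mul_nonneg (Real.exp_nonneg _) (neg_nonneg.mpr (hq.2.1 i))
  rw [← MeasureTheory.ofReal_integral_eq_lintegral_ofReal hInt hnn,
    ← intervalIntegral.integral_of_le ht, integral_exp_mul_neg]

lemma FItE_rowsum_le_one (hq : IsQMatrix q) :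
    ∀ M, ∀ t : ℝ, 0 ≤ t → ∀ i, (∑' j, FItE q M t i j) ≤ 1 := by
  intro M
  induction M with
  | zero =>
    intro t ht i
    have h0 : ∀ j, FItE q 0 t i j = GIter q 0 t i j := fun j => by simp [FItE]
    rw [tsum_congr h0, tsum_congr (fun j => GIter_zero_eq q ht i j), tsum_ite_eq]
    exact ENNReal.ofReal_le_one.mpr
      (Real.exp_le_one_iff.mpr (mul_nonpos_of_nonpos_of_nonneg (hq.2.1 i) ht))
  | succ M ih =>
    intro t ht i
    rw [tsum_congr (fun j => FItE_succ hq M ht i j), ENNReal.tsum_add, tsum_ite_eq]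
    have hexple : Real.exp (q i i * t) ≤ 1 :=
      Real.exp_le_one_iff.mpr (mul_nonpos_of_nonpos_of_nonneg (hq.2.1 i) ht)
    have h2 : (∑' j, ∫⁻ u in Set.Ioc (0:ℝ) t, ENNReal.ofReal (Real.exp (q i i * u)) *
          ∑' k, ENNReal.ofReal (offDiag q i k) * FItE q M (t - u) k j)
        ≤ ENNReal.ofReal (1 - Real.exp (q i i * t)) := by
      rw [← MeasureTheory.lintegral_tsum (fun j => kernelE_FItE_aemeas hq M ht i j)]
      rw [← lintegral_expE hq ht i]
      apply MeasureTheory.setLIntegral_mono' measurableSet_Ioc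
      intro u hu
      rw [ENNReal.tsum_mul_left]
      apply mul_le_mul_right
      rw [ENNReal.tsum_comm]
      have hswap : ∀ k : ℕ, (∑' j, ENNReal.ofReal (offDiag q i k) * FItE q M (t - u) k j)
          = ENNReal.ofReal (offDiag q i k) * ∑' j, FItE q M (t - u) k j :=
        fun k => ENNReal.tsum_mul_left
      rw [tsum_congr hswap]
      calc (∑' k, ENNReal.ofReal (offDiag q i k) * ∑' j, FItE q M (t - u) k j)
          ≤ ∑' k, ENNReal.ofReal (offDiag q i k) := by
            apply ENNReal.tsum_le_tsum
            intro k
            calc ENNReal.ofReal (offDiag q i k) * ∑' j, FItE q M (t - u) k j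
                ≤ ENNReal.ofReal (offDiag q i k) * 1 :=
                  mul_le_mul_right (ih (t - u) (by linarith [hu.2]) k) _
              _ = ENNReal.ofReal (offDiag q i k) := mul_one _
        _ = ENNReal.ofReal (∑' k, offDiag q i k) :=
            (ENNReal.ofReal_tsum_of_nonneg (offDiag_nonneg hq i) (summable_offDiag hq i)).symm
        _ ≤ ENNReal.ofReal (-q i i) := ENNReal.ofReal_le_ofReal (hq.2.2.2 i)
    calc ENNReal.ofReal (Real.exp (q i i * t)) + _
        ≤ ENNReal.ofReal (Real.exp (q i i * t)) + ENNReal.ofReal (1 - Real.exp (q i i * t)) :=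
          add_le_add_right h2 _
      _ = ENNReal.ofReal 1 := by
          rw [← ENNReal.ofReal_add (Real.exp_nonneg _) (by linarith)]
          norm_num
      _ = 1 := ENNReal.ofReal_one

lemma FItE_entry_le_one (hq : IsQMatrix q) (M : ℕ) {t : ℝ} (ht : 0 ≤ t) (i j : ℕ) :
    FItE q M t i j ≤ 1 :=
  le_trans (ENNReal.le_tsum j) (FItE_rowsum_le_one hq M t ht i)

lemma GIter_le_FItE (q : ℕ → ℕ → ℝ) {m M : ℕ} (h : m ≤ M) (t : ℝ) (i j : ℕ) :
    GIter q m t i j ≤ FItE q M t i j := by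
  unfold FItE
  exact Finset.single_le_sum (f := fun l => GIter q l t i j)
    (fun l _ => zero_le) (Finset.mem_range.mpr (by omega))

lemma PminE_rowsum_le_one (hq : IsQMatrix q) {t : ℝ} (ht : 0 ≤ t) (i : ℕ) :
    (∑' j, PminE q t i j) ≤ 1 := by
  unfold PminE
  rw [ENNReal.tsum_comm]
  rw [ENNReal.tsum_eq_iSup_nat]
  apply iSup_le
  intro M
  calc (∑ m ∈ Finset.range M, ∑' j, GIter q m t i j)
      ≤ ∑ m ∈ Finset.range (M+1), ∑' j, GIter q m t i j :=
        Finset.sum_le_sum_of_subset (Finset.range_subset_range.mpr (by omega))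
    _ = ∑' j, FItE q M t i j := by
        unfold FItE
        exact (Summable.tsum_finsetSum (fun m _ => ENNReal.summable)).symm
    _ ≤ 1 := FItE_rowsum_le_one hq M t ht i

lemma PminE_le_one (hq : IsQMatrix q) {t : ℝ} (ht : 0 ≤ t) (i j : ℕ) : PminE q t i j ≤ 1 :=
  le_trans (ENNReal.le_tsum j) (PminE_rowsum_le_one hq ht i)

lemma PminE_ne_top (hq : IsQMatrix q) {t : ℝ} (ht : 0 ≤ t) (i j : ℕ) : PminE q t i j ≠ ⊤ :=
  ne_top_of_le_ne_top ENNReal.one_ne_top (PminE_le_one hq ht i j)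
/-! ### Chapman-Kolmogorov for the iterates -/

lemma integrand_continuousOn2 (hq : IsQMatrix q) (m : ℕ) {d e c : ℝ} (hec : e ≤ c) (i j : ℕ) :
    ContinuousOn (fun u => Real.exp (q i i * u) * ∑' k, offDiag q i k * gIter q m (c - u) k j)
      (Set.Icc d e) := by
  apply ContinuousOn.mul
    ((Real.continuous_exp.comp (continuous_const.mul continuous_id)).continuousOn)
  apply (sKer_continuousOn hq m i j).comp ((continuous_const.sub continuous_id).continuousOn)
  intro u hu
  exact Set.mem_Ici.mpr (by simp only [Pi.sub_apply, id]; linarith [hu.2])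

lemma GIter_aemeas_sub2 (hq : IsQMatrix q) (m : ℕ) {t c : ℝ} (htc : t ≤ c) (k j : ℕ) :
    AEMeasurable (fun u => GIter q m (c - u) k j) (volume.restrict (Set.Ioc 0 t)) := by
  have hc : ContinuousOn (fun u => gIter q m (c - u) k j) (Set.Ioc 0 t) := by
    apply (gIter_continuousOn hq m k j).comp ((continuous_const.sub continuous_id).continuousOn)
    intro u hu
    exact Set.mem_Ici.mpr (by simp only [Pi.sub_apply, id]; linarith [hu.2])
  exact ENNReal.measurable_ofReal.comp_aemeasurable (hc.aemeasurable measurableSet_Ioc)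

lemma kernelE_aemeas2 (hq : IsQMatrix q) (m : ℕ) {t c : ℝ} (htc : t ≤ c) (i j : ℕ) :
    AEMeasurable (fun u => ENNReal.ofReal (Real.exp (q i i * u)) *
      ∑' k, ENNReal.ofReal (offDiag q i k) * GIter q m (c - u) k j)
      (volume.restrict (Set.Ioc 0 t)) := by
  apply AEMeasurable.mul
  · exact (ENNReal.measurable_ofReal.comp
      (Real.measurable_exp.comp (measurable_const.mul measurable_id))).aemeasurable
  · exact aemeasurable_tsum_ennreal fun k => (GIter_aemeas_sub2 hq m htc k j).const_mul _

lemma ofReal_integral_kernel (hq : IsQMatrix q) (m : ℕ) {t c : ℝ} (ht : 0 ≤ t) (htc : t ≤ c)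
    (i j : ℕ) :
    ENNReal.ofReal (∫ u in (0:ℝ)..t,
        Real.exp (q i i * u) * ∑' k, offDiag q i k * gIter q m (c - u) k j)
      = ∫⁻ u in Set.Ioc (0:ℝ) t, ENNReal.ofReal (Real.exp (q i i * u)) *
          ∑' k, ENNReal.ofReal (offDiag q i k) * GIter q m (c - u) k j := by
  set f := fun u => Real.exp (q i i * u) * ∑' k, offDiag q i k * gIter q m (c - u) k j with hf
  have hfc : ContinuousOn f (Set.Icc 0 t) := integrand_continuousOn2 hq m htc i j
  have hInt : MeasureTheory.IntegrableOn f (Set.Ioc 0 t) volume :=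
    (hfc.integrableOn_compact isCompact_Icc).mono_set Set.Ioc_subset_Icc_self
  have hnn : 0 ≤ᵐ[volume.restrict (Set.Ioc 0 t)] f :=
    Filter.Eventually.of_forall fun u =>
      mul_nonneg (Real.exp_nonneg _) (sKer_nonneg hq m (c - u) i j)
  rw [intervalIntegral.integral_of_le ht,
    MeasureTheory.ofReal_integral_eq_lintegral_ofReal hInt hnn]
  apply MeasureTheory.setLIntegral_congr_fun measurableSet_Ioc
  intro u _
  rw [hf]
  simp only []
  rw [ENNReal.ofReal_mul (Real.exp_nonneg _)]
  congr 1
  rw [ENNReal.ofReal_tsum_of_nonneg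
    (fun k => mul_nonneg (offDiag_nonneg hq i k) (gIter_nonneg hq m (c-u) k j))
    (summable_sKer hq m (c-u) i j)]
  exact tsum_congr fun k => ENNReal.ofReal_mul (offDiag_nonneg hq i k)

lemma ennreal_rearrange (A : ℝ≥0∞) (R : ℕ → ℝ≥0∞) (F : Finset (ℕ×ℕ))
    (X : ℕ×ℕ → ℕ → ℕ → ℝ≥0∞) (Y : ℕ×ℕ → ℕ → ℝ≥0∞) :
    A * ∑' k, R k * ∑' l, ∑ p ∈ F, X p k l * Y p l
      = ∑' l, ∑ p ∈ F, (A * ∑' k, R k * X p k l) * Y p l := by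
  have h1 : ∀ k, R k * ∑' l, ∑ p ∈ F, X p k l * Y p l
      = ∑' l, R k * ∑ p ∈ F, X p k l * Y p l := fun k => ENNReal.tsum_mul_left.symm
  rw [tsum_congr h1, ENNReal.tsum_comm, ENNReal.tsum_mul_left.symm]
  apply tsum_congr
  intro l
  have h2 : ∀ k, R k * ∑ p ∈ F, X p k l * Y p l = ∑ p ∈ F, R k * X p k l * Y p l :=
    fun k => by rw [Finset.mul_sum]; exact Finset.sum_congr rfl fun p _ => by ring
  rw [tsum_congr h2, Summable.tsum_finsetSum (fun p _ => ENNReal.summable)]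
  have h3 : ∀ p ∈ F, (∑' k, R k * X p k l * Y p l) = (∑' k, R k * X p k l) * Y p l := by
    intro p _
    rw [← ENNReal.tsum_mul_right]
  rw [Finset.sum_congr rfl h3, Finset.mul_sum]
  exact Finset.sum_congr rfl fun p _ => by ring

lemma GIter_CK (hq : IsQMatrix q) : ∀ m : ℕ, ∀ {t s : ℝ}, 0 ≤ t → 0 ≤ s → ∀ i j,
    GIter q m (t+s) i j
      = ∑' l, ∑ p ∈ Finset.HasAntidiagonal.antidiagonal m, GIter q p.1 t i l * GIter q p.2 s l j := by
  intro m
  induction m with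
  | zero =>
    intro t s ht hs i j
    have hrhs : ∀ l, (∑ p ∈ Finset.HasAntidiagonal.antidiagonal 0, GIter q p.1 t i l * GIter q p.2 s l j)
        = GIter q 0 t i l * GIter q 0 s l j := by
      intro l
      rw [Finset.Nat.antidiagonal_zero, Finset.sum_singleton]
    rw [tsum_congr hrhs]
    rw [tsum_eq_single i (fun l hl => by
      rw [GIter_zero_eq q ht i l, if_neg hl, zero_mul])]
    rw [GIter_zero_eq q ht i i, if_pos rfl, GIter_zero_eq q hs i j,
      GIter_zero_eq q (by linarith : (0:ℝ) ≤ t + s) i j]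
    by_cases h : j = i
    · rw [if_pos h, if_pos h, ← ENNReal.ofReal_mul (Real.exp_nonneg _), ← Real.exp_add]
      congr 2
      ring
    · rw [if_neg h, if_neg h, mul_zero]
  | succ m ih =>
    intro t s ht hs i j
    have hts : (0:ℝ) ≤ t + s := by linarith
    -- real-level split of the defining integral
    have hg : gIter q (m+1) (t+s) i j = ∫ u in (0:ℝ)..(t+s),
        Real.exp (q i i * u) * ∑' k, offDiag q i k * gIter q m (t+s-u) k j := by
      rw [gIter_succ, if_pos hts]
    have hint1 : IntervalIntegrable
        (fun u => Real.exp (q i i * u) * ∑' k, offDiag q i k * gIter q m (t+s-u) k j)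
        volume 0 t := by
      apply ContinuousOn.intervalIntegrable
      rw [Set.uIcc_of_le ht]
      exact integrand_continuousOn2 hq m (by linarith) i j
    have hint2 : IntervalIntegrable
        (fun u => Real.exp (q i i * u) * ∑' k, offDiag q i k * gIter q m (t+s-u) k j)
        volume t (t+s) := by
      apply ContinuousOn.intervalIntegrable
      rw [Set.uIcc_of_le (by linarith : t ≤ t + s)]
      exact integrand_continuousOn2 hq m (le_refl _) i j
    have hsplit := intervalIntegral.integral_add_adjacent_intervals hint1 hint2
    -- second piece
    have hP2 : (∫ u in t..(t+s),
          Real.exp (q i i * u) * ∑' k, offDiag q i k * gIter q m (t+s-u) k j)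
        = Real.exp (q i i * t) * gIter q (m+1) s i j := by
      have hcv := intervalIntegral.integral_comp_add_right
        (a := (0:ℝ)) (b := s)
        (fun u => Real.exp (q i i * u) * ∑' k, offDiag q i k * gIter q m (t+s-u) k j) t
      rw [zero_add] at hcv
      rw [show s + t = t + s from by ring] at hcv
      rw [← hcv]
      have hpt : ∀ x : ℝ, Real.exp (q i i * (x + t)) *
            ∑' k, offDiag q i k * gIter q m (t+s-(x+t)) k j
          = Real.exp (q i i * t) *
            (Real.exp (q i i * x) * ∑' k, offDiag q i k * gIter q m (s-x) k j) := by
        intro x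
        rw [show t + s - (x + t) = s - x by ring, show q i i * (x + t) = q i i * t + q i i * x by ring,
          Real.exp_add]
        ring
      rw [intervalIntegral.integral_congr (g :=
        fun x => Real.exp (q i i * t) *
          (Real.exp (q i i * x) * ∑' k, offDiag q i k * gIter q m (s-x) k j))
        (fun x _ => hpt x)]
      rw [intervalIntegral.integral_const_mul]
      rw [gIter_succ, if_pos hs]
    -- first piece in ENNReal
    have hP1 : ENNReal.ofReal (∫ u in (0:ℝ)..t,
          Real.exp (q i i * u) * ∑' k, offDiag q i k * gIter q m (t+s-u) k j)
        = ∑' l, ∑ p ∈ Finset.HasAntidiagonal.antidiagonal m,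
            GIter q (p.1+1) t i l * GIter q p.2 s l j := by
      rw [ofReal_integral_kernel hq m ht (by linarith) i j]
      have hcong : ∀ u ∈ Set.Ioc (0:ℝ) t,
          (ENNReal.ofReal (Real.exp (q i i * u)) *
            ∑' k, ENNReal.ofReal (offDiag q i k) * GIter q m (t+s-u) k j)
          = ∑' l, ∑ p ∈ Finset.HasAntidiagonal.antidiagonal m,
              (ENNReal.ofReal (Real.exp (q i i * u)) *
                ∑' k, ENNReal.ofReal (offDiag q i k) * GIter q p.1 (t-u) k l)
                * GIter q p.2 s l j := by
        intro u hu
        have htu : (0:ℝ) ≤ t - u := by linarith [hu.2]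
        have harg : ∀ k, GIter q m (t+s-u) k j
            = ∑' l, ∑ p ∈ Finset.HasAntidiagonal.antidiagonal m,
                GIter q p.1 (t-u) k l * GIter q p.2 s l j := by
          intro k
          rw [show t+s-u = (t-u)+s by ring]
          exact ih htu hs k j
        rw [tsum_congr (fun k => by rw [harg k])]
        exact ennreal_rearrange _ _ _ _ _
      rw [MeasureTheory.setLIntegral_congr_fun measurableSet_Ioc
        (fun u hu => hcong u hu)]
      rw [MeasureTheory.lintegral_tsum (fun l => by
        apply Finset.aemeasurable_fun_sum
        intro p _
        exact (kernelE_aemeas2 hq p.1 (le_refl t) i l).mul_const _)]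
      apply tsum_congr
      intro l
      rw [MeasureTheory.lintegral_finset_sum' _ (fun p _ =>
        (kernelE_aemeas2 hq p.1 (le_refl t) i l).mul_const _)]
      apply Finset.sum_congr rfl
      intro p _
      rw [MeasureTheory.lintegral_mul_const'' _ (kernelE_aemeas2 hq p.1 (le_refl t) i l)]
      congr 1
      exact (GIter_succ_lintegral hq p.1 ht i l).symm
    -- assemble
    have hP2nn : 0 ≤ ∫ u in t..(t+s),
        Real.exp (q i i * u) * ∑' k, offDiag q i k * gIter q m (t+s-u) k j := by
      rw [hP2]
      exact mul_nonneg (Real.exp_nonneg _) (gIter_nonneg hq (m+1) s i j)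
    have hP1nn : 0 ≤ ∫ u in (0:ℝ)..t,
        Real.exp (q i i * u) * ∑' k, offDiag q i k * gIter q m (t+s-u) k j :=
      intervalIntegral.integral_nonneg ht (fun u _ =>
        mul_nonneg (Real.exp_nonneg _) (sKer_nonneg hq m (t+s-u) i j))
    have hofP2 : ENNReal.ofReal (∫ u in t..(t+s),
          Real.exp (q i i * u) * ∑' k, offDiag q i k * gIter q m (t+s-u) k j)
        = ∑' l, GIter q 0 t i l * GIter q (m+1) s l j := by
      rw [hP2, ENNReal.ofReal_mul (Real.exp_nonneg _)]
      rw [tsum_eq_single i (fun l hl => by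
        rw [GIter_zero_eq q ht i l, if_neg hl, zero_mul])]
      rw [GIter_zero_eq q ht i i, if_pos rfl]
      rfl
    show ENNReal.ofReal (gIter q (m+1) (t+s) i j) = _
    rw [hg, ← hsplit, ENNReal.ofReal_add hP1nn hP2nn, hP1, hofP2, ← ENNReal.tsum_add]
    apply tsum_congr
    intro l
    rw [Finset.Nat.sum_antidiagonal_succ
      (f := fun p => GIter q p.1 t i l * GIter q p.2 s l j)]
    ring

lemma PminE_CK (hq : IsQMatrix q) {t s : ℝ} (ht : 0 ≤ t) (hs : 0 ≤ s) (i j : ℕ) :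
    PminE q (t+s) i j = ∑' l, PminE q t i l * PminE q s l j := by
  unfold PminE
  rw [tsum_congr (fun m => GIter_CK hq m ht hs i j), ENNReal.tsum_comm]
  apply tsum_congr
  intro l
  have hprod : (∑' m, GIter q m t i l) * (∑' m, GIter q m s l j)
      = ∑' p : ℕ × ℕ, GIter q p.1 t i l * GIter q p.2 s l j := by
    calc (∑' m, GIter q m t i l) * (∑' m, GIter q m s l j)
        = ∑' a, GIter q a t i l * ∑' b, GIter q b s l j := ENNReal.tsum_mul_right.symm
      _ = ∑' (a : ℕ) (b : ℕ), GIter q a t i l * GIter q b s l j :=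
          tsum_congr fun a => ENNReal.tsum_mul_left.symm
      _ = ∑' p : ℕ × ℕ, GIter q p.1 t i l * GIter q p.2 s l j :=
          (ENNReal.tsum_prod (f := fun a b => GIter q a t i l * GIter q b s l j)).symm
  rw [hprod]
  rw [← Finset.HasAntidiagonal.sigmaAntidiagonalEquivProd.tsum_eq
    (fun p : ℕ × ℕ => GIter q p.1 t i l * GIter q p.2 s l j)]
  rw [ENNReal.tsum_sigma']
  apply tsum_congr
  intro m
  rw [← Finset.tsum_subtype (Finset.HasAntidiagonal.antidiagonal m)
    (fun p : ℕ × ℕ => GIter q p.1 t i l * GIter q p.2 s l j)]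
  apply tsum_congr
  intro c
  rfl
/-! ### real iterates partial sums -/

noncomputable def FIter (q : ℕ → ℕ → ℝ) (M : ℕ) (t : ℝ) (i j : ℕ) : ℝ :=
  ∑ l ∈ Finset.range (M+1), gIter q l t i j

lemma ofReal_FIter (hq : IsQMatrix q) (M : ℕ) (t : ℝ) (i j : ℕ) :
    ENNReal.ofReal (FIter q M t i j) = FItE q M t i j := by
  unfold FIter FItE GIter
  exact ENNReal.ofReal_sum_of_nonneg (fun l _ => gIter_nonneg hq l t i j)

lemma FIter_nonneg (hq : IsQMatrix q) (M : ℕ) (t : ℝ) (i j : ℕ) : 0 ≤ FIter q M t i j :=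
  Finset.sum_nonneg fun l _ => gIter_nonneg hq l t i j

lemma FIter_le_one (hq : IsQMatrix q) (M : ℕ) (t : ℝ) (i j : ℕ) : FIter q M t i j ≤ 1 := by
  by_cases ht : 0 ≤ t
  · have h := FItE_entry_le_one hq M ht i j
    rw [← ofReal_FIter hq M t i j] at h
    exact (ENNReal.ofReal_le_one.mp h)
  · unfold FIter
    rw [Finset.sum_congr rfl (fun l _ => gIter_neg q l ht i j)]
    simp

lemma FIter_continuousOn (hq : IsQMatrix q) (M : ℕ) (i j : ℕ) :
    ContinuousOn (fun t => FIter q M t i j) (Ici (0:ℝ)) := by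
  unfold FIter
  exact continuousOn_finset_sum _ (fun l _ => gIter_continuousOn hq l i j)

lemma FIter_sum_continuousOn (hq : IsQMatrix q) (M : ℕ) (i j : ℕ) :
    ContinuousOn (fun x => ∑' k, offDiag q i k * FIter q M x k j) (Ici (0:ℝ)) := by
  apply continuousOn_tsum (u := fun k => offDiag q i k)
    (fun k => continuousOn_const.mul (FIter_continuousOn hq M k j)) (summable_offDiag hq i)
  intro k u _
  simp only [Pi.mul_apply]
  rw [Real.norm_eq_abs, abs_mul, abs_of_nonneg (offDiag_nonneg hq i k)]
  exact mul_le_of_le_one_right (offDiag_nonneg hq i k)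
    (abs_le.mpr ⟨by linarith [FIter_nonneg hq M u k j], FIter_le_one hq M u k j⟩)

lemma summable_FIter_mul (hq : IsQMatrix q) (M : ℕ) (x : ℝ) (i j : ℕ) :
    Summable (fun k => offDiag q i k * FIter q M x k j) :=
  summable_offDiag_mul hq i (fun k => FIter_nonneg hq M x k j) (fun k => FIter_le_one hq M x k j)

lemma gIter_zero_real (q : ℕ → ℕ → ℝ) {t : ℝ} (ht : 0 ≤ t) (i j : ℕ) :
    gIter q 0 t i j = (if i = j then (1:ℝ) else 0) * Real.exp (q i i * t) := by
  rw [gIter_zero, if_pos ht]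
  split <;> simp

/-- the real recursion for `FIter` -/
lemma FIter_succ_real (hq : IsQMatrix q) (M : ℕ) {t : ℝ} (ht : 0 ≤ t) (i j : ℕ) :
    FIter q (M+1) t i j = (if i = j then (1:ℝ) else 0) * Real.exp (q i i * t) +
      ∫ u in (0:ℝ)..t,
        Real.exp (q i i * (t - u)) * ∑' k, offDiag q i k * FIter q M u k j := by
  unfold FIter
  rw [Finset.sum_range_succ']
  rw [gIter_zero_real q ht i j]
  rw [add_comm]
  congr 1
  have h1 : ∀ l ∈ Finset.range (M+1), gIter q (l+1) t i j
      = ∫ u in (0:ℝ)..t, Real.exp (q i i * u) * ∑' k, offDiag q i k * gIter q l (t-u) k j :=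
    fun l _ => by rw [gIter_succ, if_pos ht]
  rw [Finset.sum_congr rfl h1]
  rw [← intervalIntegral.integral_finset_sum (fun l _ => by
    apply ContinuousOn.intervalIntegrable
    rw [Set.uIcc_of_le ht]
    exact integrand_continuousOn2 hq l (le_refl t) i j)]
  have h2 : ∀ u : ℝ, (∑ l ∈ Finset.range (M+1),
        Real.exp (q i i * u) * ∑' k, offDiag q i k * gIter q l (t-u) k j)
      = Real.exp (q i i * u) *
          ∑' k, offDiag q i k * ∑ l ∈ Finset.range (M+1), gIter q l (t-u) k j := by
    intro u
    rw [← Finset.mul_sum]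
    congr 1
    rw [← Summable.tsum_finsetSum (fun l _ => summable_sKer hq l (t-u) i j)]
    exact tsum_congr fun k => by rw [← Finset.mul_sum]
  rw [intervalIntegral.integral_congr (fun u _ => h2 u)]
  -- now reflect
  set W := fun x => ∑' k, offDiag q i k * ∑ l ∈ Finset.range (M+1), gIter q l x k j with hW
  have h3 : ∀ u : ℝ, Real.exp (q i i * u) * W (t - u)
      = (fun x => Real.exp (q i i * (t - x)) * W x) (t - u) := by
    intro u
    simp only []
    rw [show t - (t - u) = u by ring]
  rw [intervalIntegral.integral_congr (g := fun u =>
    (fun x => Real.exp (q i i * (t - x)) * W x) (t - u)) (fun u _ => h3 u)]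
  rw [intervalIntegral.integral_comp_sub_left (fun x => Real.exp (q i i * (t - x)) * W x) t]
  rw [sub_self, sub_zero]

/-- comparison: the iterates lie below any transition-function solution -/
lemma FIter_le_sol (hq : IsQMatrix q) (hT : IsTransitionFunction Pf) (hB : BackwardEq q Pf) :
    ∀ M : ℕ, ∀ {t : ℝ}, 0 ≤ t → ∀ i j, FIter q M t i j ≤ Pf t i j := by
  intro M
  induction M with
  | zero =>
    intro t ht i j
    have h0 : FIter q 0 t i j = gIter q 0 t i j := by simp [FIter]
    rw [h0, gIter_zero_real q ht i j]
    exact sol_ge_exp hq hT hB ht i j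
  | succ M ih =>
    intro t ht i j
    rw [FIter_succ_real hq M ht i j, hB t i j ht]
    apply add_le_add_right
    have hRW : ∀ s : ℝ, (∑' k, if k = i then 0 else q i k * Pf s k j)
        = ∑' k, offDiag q i k * Pf s k j := fun s => backward_sum_eq q i _
    have hcongr : (∫ s in (0:ℝ)..t,
          Real.exp (q i i * (t - s)) * ∑' k, if k = i then 0 else q i k * Pf s k j)
        = ∫ s in (0:ℝ)..t, Real.exp (q i i * (t - s)) * ∑' k, offDiag q i k * Pf s k j := by
      apply intervalIntegral.integral_congr
      intro s _
      simp only [hRW]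
    rw [hcongr]
    apply intervalIntegral.integral_mono_on ht
    · apply ContinuousOn.intervalIntegrable
      rw [Set.uIcc_of_le ht]
      apply ContinuousOn.mul
      · exact (Real.continuous_exp.comp (continuous_const.mul
          (continuous_const.sub continuous_id))).continuousOn
      · exact (FIter_sum_continuousOn hq M i j).mono
          (fun u hu => Set.mem_Ici.mpr hu.1)
    · apply ContinuousOn.intervalIntegrable
      rw [Set.uIcc_of_le ht]
      apply ContinuousOn.mul
      · exact (Real.continuous_exp.comp (continuous_const.mul
          (continuous_const.sub continuous_id))).continuousOn
      · exact (sol_sum_continuousOn hq hT hB i j).mono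
          (fun u hu => Set.mem_Ici.mpr hu.1)
    · intro u hu
      apply mul_le_mul_of_nonneg_left _ (Real.exp_nonneg _)
      apply Summable.tsum_le_tsum _ (summable_FIter_mul hq M u i j)
        (summable_offDiag_mul hq i (fun k => hT.1 u k j hu.1) (fun k => tf_le_one hT hu.1 k j))
      intro k
      exact mul_le_mul_of_nonneg_left (ih hu.1 k j) (offDiag_nonneg hq i k)
/-! ### Pmin is the minimal Q-process -/

lemma PminE_neg (q : ℕ → ℕ → ℝ) {t : ℝ} (ht : ¬ 0 ≤ t) (i j : ℕ) : PminE q t i j = 0 := by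
  unfold PminE GIter
  rw [tsum_congr (fun m => by rw [gIter_neg q m ht i j, ENNReal.ofReal_zero])]
  simp

lemma PminE_ne_top' (hq : IsQMatrix q) (t : ℝ) (i j : ℕ) : PminE q t i j ≠ ⊤ := by
  by_cases ht : 0 ≤ t
  · exact PminE_ne_top hq ht i j
  · rw [PminE_neg q ht i j]; exact ENNReal.zero_ne_top

lemma Pmin_nonneg (q : ℕ → ℕ → ℝ) (t : ℝ) (i j : ℕ) : 0 ≤ Pmin q t i j :=
  ENNReal.toReal_nonneg

lemma ofReal_Pmin (hq : IsQMatrix q) (t : ℝ) (i j : ℕ) :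
    ENNReal.ofReal (Pmin q t i j) = PminE q t i j :=
  ENNReal.ofReal_toReal (PminE_ne_top' hq t i j)

lemma Pmin_le_one (hq : IsQMatrix q) {t : ℝ} (ht : 0 ≤ t) (i j : ℕ) : Pmin q t i j ≤ 1 := by
  have h := PminE_le_one hq ht i j
  calc Pmin q t i j ≤ (1 : ℝ≥0∞).toReal := ENNReal.toReal_mono ENNReal.one_ne_top h
    _ = 1 := ENNReal.toReal_one

lemma PminE_rowsum_ne_top (hq : IsQMatrix q) {t : ℝ} (ht : 0 ≤ t) (i : ℕ) :
    (∑' j, PminE q t i j) ≠ ⊤ :=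
  ne_top_of_le_ne_top ENNReal.one_ne_top (PminE_rowsum_le_one hq ht i)

lemma Pmin_summable (hq : IsQMatrix q) {t : ℝ} (ht : 0 ≤ t) (i : ℕ) :
    Summable (fun j => Pmin q t i j) :=
  ENNReal.summable_toReal (PminE_rowsum_ne_top hq ht i)

lemma Pmin_tsum_le_one (hq : IsQMatrix q) {t : ℝ} (ht : 0 ≤ t) (i : ℕ) :
    (∑' j, Pmin q t i j) ≤ 1 := by
  unfold Pmin
  rw [← ENNReal.tsum_toReal_eq (fun j => PminE_ne_top hq ht i j)]
  calc (∑' j, PminE q t i j).toReal ≤ (1 : ℝ≥0∞).toReal :=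
      ENNReal.toReal_mono ENNReal.one_ne_top (PminE_rowsum_le_one hq ht i)
    _ = 1 := ENNReal.toReal_one

lemma Pmin_zero (hq : IsQMatrix q) (i j : ℕ) : Pmin q 0 i j = if i = j then 1 else 0 := by
  unfold Pmin PminE
  rw [tsum_eq_single 0 (fun m hm => by
    cases m with
    | zero => exact absurd rfl hm
    | succ k =>
      unfold GIter
      rw [gIter_succ, if_pos le_rfl, intervalIntegral.integral_same, ENNReal.ofReal_zero])]
  unfold GIter
  rw [gIter_zero, if_pos le_rfl]
  by_cases h : i = j
  · simp [h]
  · simp [h]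

lemma Pmin_CK (hq : IsQMatrix q) {t s : ℝ} (ht : 0 ≤ t) (hs : 0 ≤ s) (i j : ℕ) :
    Pmin q (t+s) i j = ∑' k, Pmin q t i k * Pmin q s k j := by
  unfold Pmin
  rw [PminE_CK hq ht hs i j]
  rw [ENNReal.tsum_toReal_eq (fun l =>
    ENNReal.mul_ne_top (PminE_ne_top hq ht i l) (PminE_ne_top hq hs l j))]
  exact tsum_congr fun l => ENNReal.toReal_mul

lemma Pmin_isTransitionFunction (hq : IsQMatrix q) : IsTransitionFunction (Pmin q) :=
  ⟨fun t i j _ => Pmin_nonneg q t i j,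
   fun t i ht => Pmin_summable hq ht i,
   fun t i ht => Pmin_tsum_le_one hq ht i,
   fun i j => Pmin_zero hq i j,
   fun t s i j ht hs => Pmin_CK hq ht hs i j⟩

/-- the ENNReal backward recursion for `PminE` -/
lemma PminE_succ (hq : IsQMatrix q) {t : ℝ} (ht : 0 ≤ t) (i j : ℕ) :
    PminE q t i j = (if j = i then ENNReal.ofReal (Real.exp (q i i * t)) else 0)
      + ∫⁻ u in Set.Ioc (0:ℝ) t, ENNReal.ofReal (Real.exp (q i i * u)) *
          ∑' k, ENNReal.ofReal (offDiag q i k) * PminE q (t - u) k j := by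
  unfold PminE
  rw [tsum_eq_zero_add' (f := fun m => GIter q m t i j) ENNReal.summable]
  rw [GIter_zero_eq q ht i j]
  congr 1
  rw [tsum_congr (fun m => GIter_succ_lintegral hq m ht i j)]
  rw [← MeasureTheory.lintegral_tsum (fun m => kernelE_aemeas hq m ht i j)]
  apply MeasureTheory.lintegral_congr
  intro u
  rw [ENNReal.tsum_mul_left]
  congr 1
  rw [ENNReal.tsum_comm]
  exact tsum_congr fun k => ENNReal.tsum_mul_left

lemma PminE_aemeas_sub (hq : IsQMatrix q) {t : ℝ} (k j : ℕ) :
    AEMeasurable (fun u => PminE q (t - u) k j) (volume.restrict (Set.Ioc 0 t)) :=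
  aemeasurable_tsum_ennreal fun m => GIter_aemeas_sub2 hq m (le_refl t) k j

lemma Pmin_sum_toReal (hq : IsQMatrix q) (x : ℝ) (i j : ℕ) :
    (∑' k, offDiag q i k * Pmin q x k j)
      = (∑' k, ENNReal.ofReal (offDiag q i k) * PminE q x k j).toReal := by
  rw [ENNReal.tsum_toReal_eq (fun k =>
    ENNReal.mul_ne_top ENNReal.ofReal_ne_top (PminE_ne_top' hq x k j))]
  apply tsum_congr
  intro k
  rw [ENNReal.toReal_mul, ENNReal.toReal_ofReal (offDiag_nonneg hq i k)]
  rfl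

lemma PminE_tsum_kernel_le (hq : IsQMatrix q) {x : ℝ} (hx : 0 ≤ x) (i j : ℕ) :
    (∑' k, ENNReal.ofReal (offDiag q i k) * PminE q x k j) ≤ ENNReal.ofReal (-q i i) := by
  calc (∑' k, ENNReal.ofReal (offDiag q i k) * PminE q x k j)
      ≤ ∑' k, ENNReal.ofReal (offDiag q i k) :=
        ENNReal.tsum_le_tsum fun k => by
          calc ENNReal.ofReal (offDiag q i k) * PminE q x k j
              ≤ ENNReal.ofReal (offDiag q i k) * 1 :=
                mul_le_mul_right (PminE_le_one hq hx k j) _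
            _ = ENNReal.ofReal (offDiag q i k) := mul_one _
    _ = ENNReal.ofReal (∑' k, offDiag q i k) :=
        (ENNReal.ofReal_tsum_of_nonneg (offDiag_nonneg hq i) (summable_offDiag hq i)).symm
    _ ≤ ENNReal.ofReal (-q i i) := ENNReal.ofReal_le_ofReal (hq.2.2.2 i)

lemma Pmin_backwardEq (hq : IsQMatrix q) : BackwardEq q (Pmin q) := by
  intro t i j ht
  -- notation
  set a := q i i with ha
  -- the real integrand, in offDiag form and reflected form
  have hRW : ∀ s : ℝ, (∑' k, if k = i then 0 else q i k * Pmin q s k j)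
      = ∑' k, offDiag q i k * Pmin q s k j := fun s => backward_sum_eq q i _
  have hIcongr : (∫ s in (0:ℝ)..t,
        Real.exp (a * (t - s)) * ∑' k, if k = i then 0 else q i k * Pmin q s k j)
      = ∫ s in (0:ℝ)..t, Real.exp (a * (t - s)) * ∑' k, offDiag q i k * Pmin q s k j := by
    apply intervalIntegral.integral_congr
    intro s _
    simp only [hRW]
  set W := fun x => ∑' k, offDiag q i k * Pmin q x k j with hWdef
  have hrefl : (∫ s in (0:ℝ)..t, Real.exp (a * (t - s)) * W s)
      = ∫ u in (0:ℝ)..t, Real.exp (a * u) * W (t - u) := by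
    have h3 : ∀ u : ℝ, Real.exp (a * u) * W (t - u)
        = (fun x => Real.exp (a * (t - x)) * W x) (t - u) := by
      intro u
      simp only []
      rw [show t - (t - u) = u by ring]
    rw [intervalIntegral.integral_congr (f := fun u => Real.exp (a * u) * W (t-u))
      (g := fun u => (fun x => Real.exp (a * (t - x)) * W x) (t - u)) (fun u _ => h3 u)]
    rw [intervalIntegral.integral_comp_sub_left (fun x => Real.exp (a * (t - x)) * W x) t]
    rw [sub_self, sub_zero]
  -- ENNReal value of the reflected integral
  have hWto : ∀ x : ℝ, W x = (∑' k, ENNReal.ofReal (offDiag q i k) * PminE q x k j).toReal :=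
    fun x => Pmin_sum_toReal hq x i j
  have haemeas : AEMeasurable
      (fun u => Real.exp (a * u) * W (t - u)) (volume.restrict (Set.Ioc 0 t)) := by
    have h1 : AEMeasurable (fun u => (∑' k, ENNReal.ofReal (offDiag q i k) *
        PminE q (t - u) k j).toReal) (volume.restrict (Set.Ioc 0 t)) :=
      (ENNReal.measurable_toReal.comp_aemeasurable
        (aemeasurable_tsum_ennreal fun k => (PminE_aemeas_sub hq k j).const_mul _))
    have h2 : AEMeasurable (fun u : ℝ => Real.exp (a * u))
        (volume.restrict (Set.Ioc 0 t)) :=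
      (Real.measurable_exp.comp (measurable_const.mul measurable_id)).aemeasurable
    have h4 := h2.mul h1
    have hfun : (fun u => Real.exp (a * u) * W (t - u))
        = fun u => Real.exp (a * u) * (∑' k, ENNReal.ofReal (offDiag q i k) *
            PminE q (t - u) k j).toReal := by
      funext u
      rw [hWto (t - u)]
    rw [hfun]
    exact h4
  have hintegrable : MeasureTheory.Integrable (fun u => Real.exp (a * u) * W (t - u))
      (volume.restrict (Set.Ioc 0 t)) := by
    apply MeasureTheory.Integrable.mono' (g := fun _ => 1 * (-a))
      (MeasureTheory.integrable_const _) haemeas.aestronglyMeasurable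
    rw [MeasureTheory.ae_restrict_iff' measurableSet_Ioc]
    apply Filter.Eventually.of_forall
    intro u hu
    rw [Real.norm_eq_abs, abs_mul, abs_of_nonneg (Real.exp_nonneg _),
      abs_of_nonneg (by
        rw [hWdef]
        exact tsum_nonneg fun k => mul_nonneg (offDiag_nonneg hq i k) (Pmin_nonneg q _ k j))]
    apply mul_le_mul
    · exact Real.exp_le_one_iff.mpr (mul_nonpos_of_nonpos_of_nonneg (hq.2.1 i) (le_of_lt hu.1))
    · -- W (t-u) ≤ -a
      rw [hWdef]
      exact tsum_offDiag_mul_le hq i (fun k => Pmin_nonneg q _ k j)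
        (fun k => by
          by_cases hx : 0 ≤ t - u
          · exact Pmin_le_one hq hx k j
          · unfold Pmin
            rw [PminE_neg q hx k j]
            simp)
    · rw [hWdef]
      exact tsum_nonneg fun k => mul_nonneg (offDiag_nonneg hq i k) (Pmin_nonneg q _ k j)
    · linarith [Real.exp_nonneg (a * u)]
  have hWnn : ∀ x, 0 ≤ W x := fun x =>
    tsum_nonneg fun k => mul_nonneg (offDiag_nonneg hq i k) (Pmin_nonneg q _ k j)
  have hofReal : ENNReal.ofReal (∫ u in (0:ℝ)..t, Real.exp (a * u) * W (t - u))
      = ∫⁻ u in Set.Ioc (0:ℝ) t, ENNReal.ofReal (Real.exp (a * u)) *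
          ∑' k, ENNReal.ofReal (offDiag q i k) * PminE q (t - u) k j := by
    rw [intervalIntegral.integral_of_le ht,
      MeasureTheory.ofReal_integral_eq_lintegral_ofReal hintegrable
        (Filter.Eventually.of_forall fun u => mul_nonneg (Real.exp_nonneg _) (hWnn (t-u)))]
    apply MeasureTheory.setLIntegral_congr_fun measurableSet_Ioc
    intro u hu
    dsimp only
    rw [ENNReal.ofReal_mul (Real.exp_nonneg _)]
    congr 1
    rw [hWto (t - u), ENNReal.ofReal_toReal]
    exact ne_top_of_le_ne_top ENNReal.ofReal_ne_top
      (PminE_tsum_kernel_le hq (by linarith [hu.2] : (0:ℝ) ≤ t - u) i j)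
  -- assemble
  have hsucc := PminE_succ hq ht i j
  set L := ∫⁻ u in Set.Ioc (0:ℝ) t, ENNReal.ofReal (Real.exp (q i i * u)) *
      ∑' k, ENNReal.ofReal (offDiag q i k) * PminE q (t - u) k j with hL
  have hLne : L ≠ ⊤ := by
    have h1 : L ≤ PminE q t i j := by
      rw [hsucc]
      exact le_add_self
    exact ne_top_of_le_ne_top (PminE_ne_top hq ht i j) h1
  have hIreal : ∫ u in (0:ℝ)..t, Real.exp (a * u) * W (t - u) = L.toReal := by
    rw [← hofReal, ENNReal.toReal_ofReal]
    exact intervalIntegral.integral_nonneg ht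
      (fun u _ => mul_nonneg (Real.exp_nonneg _) (hWnn (t-u)))
  have hdelta : ((if j = i then ENNReal.ofReal (Real.exp (q i i * t)) else 0) : ℝ≥0∞).toReal
      = (if i = j then (1:ℝ) else 0) * Real.exp (q i i * t) := by
    by_cases h : i = j
    · rw [if_pos h.symm, if_pos h, ENNReal.toReal_ofReal (Real.exp_nonneg _)]
      ring
    · rw [if_neg (fun hh : j = i => h hh.symm), if_neg h]
      simp
  calc Pmin q t i j = (PminE q t i j).toReal := rfl
    _ = ((if j = i then ENNReal.ofReal (Real.exp (q i i * t)) else 0) + L).toReal := by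
        rw [← hsucc]
    _ = ((if j = i then ENNReal.ofReal (Real.exp (q i i * t)) else 0) : ℝ≥0∞).toReal
        + L.toReal := by
        apply ENNReal.toReal_add _ hLne
        split
        · exact ENNReal.ofReal_ne_top
        · exact ENNReal.zero_ne_top
    _ = (if i = j then (1:ℝ) else 0) * Real.exp (q i i * t)
        + ∫ s in (0:ℝ)..t, Real.exp (q i i * (t - s)) *
            ∑' k, if k = i then 0 else q i k * Pmin q s k j := by
        rw [hdelta, hIcongr, hrefl, hIreal]

lemma FIter_tendsto_Pmin (hq : IsQMatrix q) (t : ℝ) (i j : ℕ) :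
    Filter.Tendsto (fun M => FIter q M t i j) Filter.atTop (nhds (Pmin q t i j)) := by
  have h1 : Filter.Tendsto (fun n => ∑ m ∈ Finset.range n, GIter q m t i j)
      Filter.atTop (nhds (PminE q t i j)) := ENNReal.tendsto_nat_tsum _
  have h2 := (ENNReal.tendsto_toReal (PminE_ne_top' hq t i j)).comp h1
  have h3 := h2.comp (Filter.tendsto_add_atTop_nat 1)
  apply h3.congr
  intro M
  show (∑ m ∈ Finset.range (M+1), GIter q m t i j).toReal = FIter q M t i j
  rw [show (∑ m ∈ Finset.range (M+1), GIter q m t i j) = FItE q M t i j from rfl,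
    ← ofReal_FIter hq M t i j, ENNReal.toReal_ofReal (FIter_nonneg hq M t i j)]

lemma Pmin_le_sol (hq : IsQMatrix q) (hT : IsTransitionFunction Pf) (hB : BackwardEq q Pf)
    {t : ℝ} (ht : 0 ≤ t) (i j : ℕ) : Pmin q t i j ≤ Pf t i j :=
  le_of_tendsto (FIter_tendsto_Pmin hq t i j)
    (Filter.Eventually.of_forall fun M => FIter_le_sol hq hT hB M ht i j)

lemma Pmin_isMinimal (hq : IsQMatrix q) : IsMinimalQProcess q (Pmin q) :=
  ⟨Pmin_isTransitionFunction hq, Pmin_backwardEq hq,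
    fun _ hT hB t i j ht => Pmin_le_sol hq hT hB ht i j⟩

lemma sol_eq_Pmin (hq : IsQMatrix q) {P : ℝ → ℕ → ℕ → ℝ} (hP : IsMinimalQProcess q P)
    {t : ℝ} (ht : 0 ≤ t) (i j : ℕ) : P t i j = Pmin q t i j :=
  le_antisymm (hP.2.2 (Pmin q) (Pmin_isTransitionFunction hq) (Pmin_backwardEq hq) t i j ht)
    (Pmin_le_sol hq hP.1 hP.2.1 ht i j)
/-! ### liminf helper lemmas -/

lemma liminf_const_mul_le (c : ℝ≥0∞) (b : ℕ → ℝ≥0∞) :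
    c * Filter.liminf b Filter.atTop ≤ Filter.liminf (fun n => c * b n) Filter.atTop := by
  rw [Filter.liminf_eq_iSup_iInf_of_nat, Filter.liminf_eq_iSup_iInf_of_nat, ENNReal.mul_iSup]
  apply iSup_mono
  intro n
  apply le_iInf₂
  intro i hi
  exact mul_le_mul_right (iInf₂_le i hi) c

lemma liminf_const_add_le (c : ℝ≥0∞) (b : ℕ → ℝ≥0∞) :
    c + Filter.liminf b Filter.atTop ≤ Filter.liminf (fun n => c + b n) Filter.atTop := by
  rw [Filter.liminf_eq_iSup_iInf_of_nat, Filter.liminf_eq_iSup_iInf_of_nat, ENNReal.add_iSup]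
  apply iSup_mono
  intro n
  apply le_iInf₂
  intro i hi
  exact add_le_add_right (iInf₂_le i hi) c

lemma ofReal_tendsto_mul_liminf {r : ℕ → ℝ} {r0 : ℝ}
    (hr : Filter.Tendsto r Filter.atTop (nhds r0)) (b : ℕ → ℝ≥0∞) :
    ENNReal.ofReal r0 * Filter.liminf b Filter.atTop
      ≤ Filter.liminf (fun n => ENNReal.ofReal (r n) * b n) Filter.atTop := by
  rcases le_or_gt r0 0 with h0 | h0
  · rw [ENNReal.ofReal_eq_zero.mpr h0, zero_mul]
    exact zero_le
  have key : ∀ ε : ℝ, 0 < ε → ε < r0 →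
      ENNReal.ofReal (r0 - ε) * Filter.liminf b Filter.atTop
        ≤ Filter.liminf (fun n => ENNReal.ofReal (r n) * b n) Filter.atTop := by
    intro ε hε hεr
    have hev : ∀ᶠ n in Filter.atTop, r0 - ε ≤ r n :=
      hr.eventually (eventually_ge_nhds (by linarith))
    calc ENNReal.ofReal (r0 - ε) * Filter.liminf b Filter.atTop
        ≤ Filter.liminf (fun n => ENNReal.ofReal (r0 - ε) * b n) Filter.atTop :=
          liminf_const_mul_le _ _
      _ ≤ Filter.liminf (fun n => ENNReal.ofReal (r n) * b n) Filter.atTop :=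
          Filter.liminf_le_liminf (hev.mono fun n hn =>
            mul_le_mul_left (ENNReal.ofReal_le_ofReal hn) _)
  set L := Filter.liminf b Filter.atTop with hLdef
  rcases eq_top_or_lt_top L with hL | hL
  · have h2 := key (r0/2) (by linarith) (by linarith)
    have h3 : ENNReal.ofReal (r0 - r0/2) * L = ⊤ := by
      rw [hL, ENNReal.mul_top]
      simp only [ne_eq, ENNReal.ofReal_eq_zero, not_le]
      linarith
    rw [h3] at h2
    exact le_trans le_top h2
  · apply ENNReal.le_of_forall_pos_le_add
    intro η hη _
    set cL := L.toReal + 1 with hcL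
    have hcLpos : 0 < cL := by
      have := ENNReal.toReal_nonneg (a := L)
      rw [hcL]; linarith
    set ε := min (r0/2) ((η : ℝ) / cL) with hεdef
    have hεpos : 0 < ε := lt_min (by linarith) (div_pos (by exact_mod_cast hη) hcLpos)
    have hεlt : ε < r0 := lt_of_le_of_lt (min_le_left _ _) (by linarith)
    have hLle : L ≤ ENNReal.ofReal cL := by
      rw [hcL]
      have := ENNReal.ofReal_toReal hL.ne
      calc L = ENNReal.ofReal L.toReal := this.symm
        _ ≤ ENNReal.ofReal (L.toReal + 1) := ENNReal.ofReal_le_ofReal (by linarith)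
    have hsplit : ENNReal.ofReal r0 * L
        ≤ ENNReal.ofReal (r0 - ε) * L + ENNReal.ofReal ε * L := by
      rw [← add_mul]
      apply mul_le_mul_left
      calc ENNReal.ofReal r0 = ENNReal.ofReal ((r0 - ε) + ε) := by ring_nf
        _ ≤ ENNReal.ofReal (r0 - ε) + ENNReal.ofReal ε := ENNReal.ofReal_add_le
    have hεL : ENNReal.ofReal ε * L ≤ (η : ℝ≥0∞) := by
      calc ENNReal.ofReal ε * L ≤ ENNReal.ofReal ε * ENNReal.ofReal cL :=
            mul_le_mul_right hLle _
        _ = ENNReal.ofReal (ε * cL) := (ENNReal.ofReal_mul hεpos.le).symm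
        _ ≤ ENNReal.ofReal (η : ℝ) := ENNReal.ofReal_le_ofReal (by
            have h1 : ε ≤ (η : ℝ) / cL := min_le_right _ _
            calc ε * cL ≤ ((η : ℝ) / cL) * cL := by
                  apply mul_le_mul_of_nonneg_right h1 hcLpos.le
              _ = (η : ℝ) := by field_simp)
        _ = (η : ℝ≥0∞) := ENNReal.ofReal_coe_nnreal
    calc ENNReal.ofReal r0 * L ≤ ENNReal.ofReal (r0 - ε) * L + ENNReal.ofReal ε * L := hsplit
      _ ≤ Filter.liminf (fun n => ENNReal.ofReal (r n) * b n) Filter.atTop + (η : ℝ≥0∞) :=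
          add_le_add (key ε hεpos hεlt) hεL

lemma ofReal_tendsto_add_liminf {r : ℕ → ℝ} {r0 : ℝ}
    (hr : Filter.Tendsto r Filter.atTop (nhds r0)) (b : ℕ → ℝ≥0∞) :
    ENNReal.ofReal r0 + Filter.liminf b Filter.atTop
      ≤ Filter.liminf (fun n => ENNReal.ofReal (r n) + b n) Filter.atTop := by
  rcases le_or_gt r0 0 with h0 | h0
  · rw [ENNReal.ofReal_eq_zero.mpr h0, zero_add]
    exact Filter.liminf_le_liminf (Filter.Eventually.of_forall fun n => le_add_self)
  have key : ∀ ε : ℝ, 0 < ε → ε < r0 →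
      ENNReal.ofReal (r0 - ε) + Filter.liminf b Filter.atTop
        ≤ Filter.liminf (fun n => ENNReal.ofReal (r n) + b n) Filter.atTop := by
    intro ε hε hεr
    have hev : ∀ᶠ n in Filter.atTop, r0 - ε ≤ r n :=
      hr.eventually (eventually_ge_nhds (by linarith))
    calc ENNReal.ofReal (r0 - ε) + Filter.liminf b Filter.atTop
        ≤ Filter.liminf (fun n => ENNReal.ofReal (r0 - ε) + b n) Filter.atTop :=
          liminf_const_add_le _ _
      _ ≤ Filter.liminf (fun n => ENNReal.ofReal (r n) + b n) Filter.atTop :=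
          Filter.liminf_le_liminf (hev.mono fun n hn =>
            add_le_add_left (ENNReal.ofReal_le_ofReal hn) _)
  apply ENNReal.le_of_forall_pos_le_add
  intro η hη _
  set ε := min (r0/2) (η : ℝ) with hεdef
  have hεpos : 0 < ε := lt_min (by linarith) (by exact_mod_cast hη)
  have hεlt : ε < r0 := lt_of_le_of_lt (min_le_left _ _) (by linarith)
  have hsplit : ENNReal.ofReal r0 ≤ ENNReal.ofReal (r0 - ε) + ENNReal.ofReal ε := by
    calc ENNReal.ofReal r0 = ENNReal.ofReal ((r0 - ε) + ε) := by ring_nf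
      _ ≤ ENNReal.ofReal (r0 - ε) + ENNReal.ofReal ε := ENNReal.ofReal_add_le
  have hε_le : ENNReal.ofReal ε ≤ (η : ℝ≥0∞) := by
    calc ENNReal.ofReal ε ≤ ENNReal.ofReal (η : ℝ) :=
        ENNReal.ofReal_le_ofReal (min_le_right _ _)
      _ = (η : ℝ≥0∞) := ENNReal.ofReal_coe_nnreal
  calc ENNReal.ofReal r0 + Filter.liminf b Filter.atTop
      ≤ (ENNReal.ofReal (r0 - ε) + ENNReal.ofReal ε) + Filter.liminf b Filter.atTop :=
        add_le_add_left hsplit _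
    _ = (ENNReal.ofReal (r0 - ε) + Filter.liminf b Filter.atTop) + ENNReal.ofReal ε := by ring
    _ ≤ Filter.liminf (fun n => ENNReal.ofReal (r n) + b n) Filter.atTop + (η : ℝ≥0∞) :=
        add_le_add (key ε hεpos hεlt) hε_le

lemma tsum_liminf_le (x : ℕ → ℕ → ℝ≥0∞) :
    (∑' k, Filter.liminf (fun n => x n k) Filter.atTop)
      ≤ Filter.liminf (fun n => ∑' k, x n k) Filter.atTop := by
  have h := MeasureTheory.lintegral_liminf_le'
    (μ := MeasureTheory.Measure.count (α := ℕ)) (u := Filter.atTop) (f := fun n k => x n k)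
    (fun n => Measurable.of_discrete.aemeasurable)
  simpa [MeasureTheory.lintegral_count] using h
/-! ### lower semicontinuity of the iterates in the Q-matrix -/

lemma offDiag_tendsto {qn : ℕ → ℕ → ℕ → ℝ}
    (hconv : ∀ i j, Filter.Tendsto (fun n => qn n i j) Filter.atTop (nhds (q i j)))
    (i k : ℕ) :
    Filter.Tendsto (fun n => offDiag (qn n) i k) Filter.atTop (nhds (offDiag q i k)) := by
  by_cases h : k = i
  · simp only [_root_.offDiag, if_pos h]
    exact tendsto_const_nhds
  · simp only [_root_.offDiag, if_neg h]
    exact hconv i k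

lemma FItE_liminf_le (hq : IsQMatrix q) (qn : ℕ → ℕ → ℕ → ℝ) (hqn : ∀ n, IsQMatrix (qn n))
    (hconv : ∀ i j, Filter.Tendsto (fun n => qn n i j) Filter.atTop (nhds (q i j))) :
    ∀ M : ℕ, ∀ {t : ℝ}, 0 ≤ t → ∀ i j,
      FItE q M t i j ≤ Filter.liminf (fun n => FItE (qn n) M t i j) Filter.atTop := by
  intro M
  induction M with
  | zero =>
    intro t ht i j
    have h0 : ∀ p : ℕ → ℕ → ℝ, FItE p 0 t i j
        = if j = i then ENNReal.ofReal (Real.exp (p i i * t)) else 0 := by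
      intro p
      have h1 : FItE p 0 t i j = GIter p 0 t i j := by simp [FItE]
      rw [h1, GIter_zero_eq p ht i j]
    rw [h0 q]
    have h2 : (fun n => FItE (qn n) 0 t i j)
        = fun n => if j = i then ENNReal.ofReal (Real.exp (qn n i i * t)) else 0 :=
      funext fun n => h0 (qn n)
    rw [h2]
    by_cases h : j = i
    · simp only [if_pos h]
      have htend : Filter.Tendsto (fun n => ENNReal.ofReal (Real.exp (qn n i i * t)))
          Filter.atTop (nhds (ENNReal.ofReal (Real.exp (q i i * t)))) := by
        apply (ENNReal.continuous_ofReal.tendsto _).comp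
        apply (Real.continuous_exp.tendsto _).comp
        exact (hconv i i).mul_const t
      rw [htend.liminf_eq]
    · simp only [if_neg h]
      exact zero_le
  | succ M ih =>
    intro t ht i j
    rw [FItE_succ hq M ht i j]
    have hrw : (fun n => FItE (qn n) (M+1) t i j)
        = fun n => (if j = i then ENNReal.ofReal (Real.exp (qn n i i * t)) else 0)
          + ∫⁻ u in Set.Ioc (0:ℝ) t, ENNReal.ofReal (Real.exp (qn n i i * u)) *
              ∑' k, ENNReal.ofReal (offDiag (qn n) i k) * FItE (qn n) M (t - u) k j :=
      funext fun n => FItE_succ (hqn n) M ht i j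
    rw [hrw]
    -- Fatou for the integral part
    have hFatou : (∫⁻ u in Set.Ioc (0:ℝ) t, ENNReal.ofReal (Real.exp (q i i * u)) *
          ∑' k, ENNReal.ofReal (offDiag q i k) * FItE q M (t - u) k j)
        ≤ Filter.liminf (fun n => ∫⁻ u in Set.Ioc (0:ℝ) t,
            ENNReal.ofReal (Real.exp (qn n i i * u)) *
              ∑' k, ENNReal.ofReal (offDiag (qn n) i k) * FItE (qn n) M (t - u) k j)
            Filter.atTop := by
      have hmono : ∀ u ∈ Set.Ioc (0:ℝ) t,
          (ENNReal.ofReal (Real.exp (q i i * u)) *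
            ∑' k, ENNReal.ofReal (offDiag q i k) * FItE q M (t - u) k j)
          ≤ Filter.liminf (fun n => ENNReal.ofReal (Real.exp (qn n i i * u)) *
              ∑' k, ENNReal.ofReal (offDiag (qn n) i k) * FItE (qn n) M (t - u) k j)
              Filter.atTop := by
        intro u hu
        have htu : (0:ℝ) ≤ t - u := by linarith [hu.2]
        have hk : ∀ k, ENNReal.ofReal (offDiag q i k) * FItE q M (t - u) k j
            ≤ Filter.liminf (fun n =>
                ENNReal.ofReal (offDiag (qn n) i k) * FItE (qn n) M (t - u) k j)
                Filter.atTop := by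
          intro k
          calc ENNReal.ofReal (offDiag q i k) * FItE q M (t - u) k j
              ≤ ENNReal.ofReal (offDiag q i k) *
                  Filter.liminf (fun n => FItE (qn n) M (t - u) k j) Filter.atTop :=
                mul_le_mul_right (ih htu k j) _
            _ ≤ _ := ofReal_tendsto_mul_liminf (offDiag_tendsto hconv i k) _
        have hsum : (∑' k, ENNReal.ofReal (offDiag q i k) * FItE q M (t - u) k j)
            ≤ Filter.liminf (fun n =>
                ∑' k, ENNReal.ofReal (offDiag (qn n) i k) * FItE (qn n) M (t - u) k j)
                Filter.atTop :=
          le_trans (ENNReal.tsum_le_tsum hk) (tsum_liminf_le _)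
        calc ENNReal.ofReal (Real.exp (q i i * u)) *
              ∑' k, ENNReal.ofReal (offDiag q i k) * FItE q M (t - u) k j
            ≤ ENNReal.ofReal (Real.exp (q i i * u)) *
                Filter.liminf (fun n =>
                  ∑' k, ENNReal.ofReal (offDiag (qn n) i k) * FItE (qn n) M (t - u) k j)
                  Filter.atTop := mul_le_mul_right hsum _
          _ ≤ _ := by
              apply ofReal_tendsto_mul_liminf
              apply (Real.continuous_exp.tendsto _).comp
              exact (hconv i i).mul_const u
      calc (∫⁻ u in Set.Ioc (0:ℝ) t, ENNReal.ofReal (Real.exp (q i i * u)) *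
            ∑' k, ENNReal.ofReal (offDiag q i k) * FItE q M (t - u) k j)
          ≤ ∫⁻ u in Set.Ioc (0:ℝ) t,
              Filter.liminf (fun n => ENNReal.ofReal (Real.exp (qn n i i * u)) *
                ∑' k, ENNReal.ofReal (offDiag (qn n) i k) * FItE (qn n) M (t - u) k j)
                Filter.atTop :=
            MeasureTheory.setLIntegral_mono' measurableSet_Ioc hmono
        _ ≤ _ := MeasureTheory.lintegral_liminf_le'
            (fun n => kernelE_FItE_aemeas (hqn n) M ht i j)
    by_cases h : j = i
    · simp only [if_pos h]
      calc ENNReal.ofReal (Real.exp (q i i * t)) + _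
          ≤ ENNReal.ofReal (Real.exp (q i i * t)) + Filter.liminf (fun n =>
              ∫⁻ u in Set.Ioc (0:ℝ) t, ENNReal.ofReal (Real.exp (qn n i i * u)) *
                ∑' k, ENNReal.ofReal (offDiag (qn n) i k) * FItE (qn n) M (t - u) k j)
              Filter.atTop := add_le_add_right hFatou _
        _ ≤ _ := by
            apply ofReal_tendsto_add_liminf
            apply (Real.continuous_exp.tendsto _).comp
            exact (hconv i i).mul_const t
    · simp only [if_neg h]
      calc (0 : ℝ≥0∞) + _ ≤ (0:ℝ≥0∞) + Filter.liminf (fun n =>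
            ∫⁻ u in Set.Ioc (0:ℝ) t, ENNReal.ofReal (Real.exp (qn n i i * u)) *
              ∑' k, ENNReal.ofReal (offDiag (qn n) i k) * FItE (qn n) M (t - u) k j)
            Filter.atTop := add_le_add_right hFatou _
        _ ≤ _ := by
            rw [zero_add]
            exact Filter.liminf_le_liminf (Filter.Eventually.of_forall fun n => by
              rw [zero_add])
end S10
/-- if `qn n → q` entrywise and `q` is regular, then
`Pn n t i j → P t i j` for the minimal processes. -/
theorem statement10 (q : ℕ → ℕ → ℝ) (hq : IsQMatrix q) (hreg : IsRegularQ q)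
    (qn : ℕ → ℕ → ℕ → ℝ) (hqnQ : ∀ n, IsQMatrix (qn n))
    (hconv : ∀ i j : ℕ,
      Filter.Tendsto (fun n => qn n i j) Filter.atTop (nhds (q i j)))
    (Pn : ℕ → ℝ → ℕ → ℕ → ℝ) (P : ℝ → ℕ → ℕ → ℝ)
    (hPn : ∀ n, IsMinimalQProcess (qn n) (Pn n))
    (hP : IsMinimalQProcess q P) :
    ∀ t : ℝ, 0 ≤ t → ∀ i j : ℕ,
      Filter.Tendsto (fun n => Pn n t i j) Filter.atTop (nhds (P t i j)) := by
  intro t ht i j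
  classical
  have hlow : ∀ j' : ℕ, ENNReal.ofReal (P t i j')
      ≤ Filter.liminf (fun n => ENNReal.ofReal (Pn n t i j')) Filter.atTop := by
    intro j'
    have h1 : ENNReal.ofReal (P t i j') = S10.PminE q t i j' := by
      rw [S10.sol_eq_Pmin hq hP ht i j']
      exact S10.ofReal_Pmin hq t i j'
    rw [h1, show S10.PminE q t i j' = ∑' m, S10.GIter q m t i j' from rfl,
      ENNReal.tsum_eq_iSup_nat]
    apply iSup_le
    intro M
    calc (∑ m ∈ Finset.range M, S10.GIter q m t i j')
        ≤ ∑ m ∈ Finset.range (M+1), S10.GIter q m t i j' :=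
          Finset.sum_le_sum_of_subset (Finset.range_subset_range.mpr (by omega))
      _ = S10.FItE q M t i j' := rfl
      _ ≤ Filter.liminf (fun n => S10.FItE (qn n) M t i j') Filter.atTop :=
          S10.FItE_liminf_le hq qn hqnQ hconv M ht i j'
      _ ≤ Filter.liminf (fun n => ENNReal.ofReal (Pn n t i j')) Filter.atTop :=
          Filter.liminf_le_liminf (Filter.Eventually.of_forall fun n => by
            rw [← S10.ofReal_FIter (hqnQ n) M t i j']
            exact ENNReal.ofReal_le_ofReal
              (S10.FIter_le_sol (hqnQ n) (hPn n).1 (hPn n).2.1 M ht i j'))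
  have hlowev : ∀ j' : ℕ, ∀ δ : ℝ, 0 < δ →
      ∀ᶠ n in Filter.atTop, P t i j' - δ < Pn n t i j' := by
    intro j' δ hδ
    rcases lt_or_ge (P t i j' - δ) 0 with hneg | hpos
    · exact Filter.Eventually.of_forall fun n => lt_of_lt_of_le hneg ((hPn n).1.1 t i j' ht)
    · have hPj : 0 < P t i j' := by linarith
      have hc : ENNReal.ofReal (P t i j' - δ) < ENNReal.ofReal (P t i j') := by
        rw [ENNReal.ofReal_lt_ofReal_iff hPj]; linarith
      have hev := Filter.eventually_lt_of_lt_liminf (lt_of_lt_of_le hc (hlow j'))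
      exact hev.mono fun n hn => (ENNReal.ofReal_lt_ofReal_iff_of_nonneg hpos).mp hn
  rw [Metric.tendsto_atTop]
  intro ε hε
  have hone : (∑' j', P t i j') = 1 := hreg.2 P hP t ht i
  have hsummable : Summable (fun j' => P t i j') := hP.1.2.1 t i ht
  obtain ⟨s0, hs0⟩ : ∃ s0 : Finset ℕ, 1 - ε/4 < ∑ j' ∈ s0, P t i j' := by
    have h2 : Filter.Tendsto (fun u : Finset ℕ => ∑ j' ∈ u, P t i j')
        Filter.atTop (nhds 1) := by
      rw [← hone]; exact hsummable.hasSum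
    exact (h2.eventually (eventually_gt_nhds (by linarith))).exists
  set s := s0.erase j with hsdef
  have hjs : j ∉ s := Finset.notMem_erase j s0
  have hs_sum : 1 - ε/4 - P t i j ≤ ∑ j' ∈ s, P t i j' := by
    by_cases hj : j ∈ s0
    · have h3 := Finset.sum_erase_add s0 (fun j' => P t i j') hj
      rw [hsdef]
      linarith
    · rw [hsdef, Finset.erase_eq_of_notMem hj]
      have h4 := hP.1.1 t i j ht
      linarith
  set c := (s.card : ℝ) with hc
  have hcnn : 0 ≤ c := Nat.cast_nonneg _
  set δ := ε / (4 * (c + 1)) with hδdef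
  have hδpos : 0 < δ := by
    apply div_pos hε
    nlinarith
  have hcard : c * δ ≤ ε/4 := by
    rw [hδdef, mul_comm, div_mul_eq_mul_div,
      div_le_div_iff₀ (by nlinarith : (0:ℝ) < 4*(c+1)) (by norm_num : (0:ℝ) < 4)]
    nlinarith
  have hev1 : ∀ᶠ n in Filter.atTop, ∀ j' ∈ s, P t i j' - δ < Pn n t i j' :=
    (Filter.eventually_all_finset s).mpr fun j' _ => hlowev j' δ hδpos
  have hev2 : ∀ᶠ n in Filter.atTop, P t i j - ε/2 < Pn n t i j :=
    hlowev j (ε/2) (by linarith)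
  have hfinal : ∀ᶠ n in Filter.atTop, dist (Pn n t i j) (P t i j) < ε := by
    filter_upwards [hev1, hev2] with n h1 h2
    have hA : Pn n t i j + ∑ j' ∈ s, Pn n t i j' ≤ 1 := by
      have hins : (∑ j' ∈ insert j s, Pn n t i j')
          = Pn n t i j + ∑ j' ∈ s, Pn n t i j' := Finset.sum_insert hjs
      have hle : (∑ j' ∈ insert j s, Pn n t i j') ≤ ∑' j', Pn n t i j' :=
        Summable.sum_le_tsum _ (fun k _ => (hPn n).1.1 t i k ht) ((hPn n).1.2.1 t i ht)
      have hle1 : (∑' j', Pn n t i j') ≤ 1 := (hPn n).1.2.2.1 t i ht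
      rw [hins] at hle
      linarith
    have hB : (∑ j' ∈ s, (P t i j' - δ)) ≤ ∑ j' ∈ s, Pn n t i j' :=
      Finset.sum_le_sum fun j' hj' => (h1 j' hj').le
    have hBsum : (∑ j' ∈ s, (P t i j' - δ)) = (∑ j' ∈ s, P t i j') - c * δ := by
      rw [Finset.sum_sub_distrib, Finset.sum_const, nsmul_eq_mul, hc]
    have hup : Pn n t i j < P t i j + ε := by
      have h5 : (∑ j' ∈ s, P t i j') - c * δ ≤ ∑ j' ∈ s, Pn n t i j' := by
        rw [← hBsum]; exact hB
      linarith
    rw [Real.dist_eq, abs_sub_lt_iff]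
    constructor <;> linarith
  exact Filter.eventually_atTop.mp hfinal
end
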